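/- arXiv:0812.3485 — 4 statements merged into one kernel-verified Lean document; each statement's English description precedes it below -/
import Mathlib

section
/- Let (X,Y) be a random vector with the bivariate Cauchy density f(x,y) = (2/π)(1 + x² + y²)^{−3/2} on (0,∞)². Then both marginal distribution functions equal F(x) = (2/π)·arctan(x), and for all x, y ∈ (0,∞): lim_{t↓0} t^{−1}·Pr[1 − F(X) ≤ tx, 1 − F(Y) ≤ ty] = x + y − (x² + y²)^{1/2}. -/
open MeasureTheory Set Real Filter Topology
open scoped ENNReal

noncomputable section

-- limit: y / sqrt (c + y^2) → 1 at top, for c > 0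
lemma lim1 (c : ℝ) (hc : 0 < c) :
    Tendsto (fun y : ℝ => y / Real.sqrt (c + y ^ 2)) atTop (𝓝 1) := by
  have h0 : Tendsto (fun y : ℝ => c / y ^ 2 + 1) atTop (𝓝 1) := by
    have : Tendsto (fun y : ℝ => c / y ^ 2) atTop (𝓝 0) :=
      Tendsto.div_atTop tendsto_const_nhds (tendsto_pow_atTop two_ne_zero)
    simpa using this.add tendsto_const_nhds
  have h1 : Tendsto (fun y : ℝ => 1 / Real.sqrt (c / y ^ 2 + 1)) atTop (𝓝 1) := by
    have := (h0.sqrt).inv₀ (by simp)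
    simpa using this.const_mul 1 |>.congr (fun y => by ring)
  refine h1.congr' ?_
  filter_upwards [eventually_gt_atTop 0] with y hy
  have hy2 : (0:ℝ) < y ^ 2 := by positivity
  have hcy : 0 < c + y ^ 2 := by positivity
  have hs : Real.sqrt (c / y ^ 2 + 1) = Real.sqrt (c + y ^ 2) / y := by
    rw [show c / y ^ 2 + 1 = (c + y ^ 2) / y ^ 2 by field_simp]
    rw [Real.sqrt_div hcy.le, Real.sqrt_sq hy.le]
  rw [hs]
  rw [one_div_div]

lemma hasDeriv_inner (c : ℝ) (hc : 0 < c) (y : ℝ) :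
    HasDerivAt (fun y : ℝ => y / (c * Real.sqrt (c + y ^ 2)))
      ((c + y ^ 2) ^ (-(3:ℝ)/2)) y := by
  have hcy : (0:ℝ) < c + y ^ 2 := by positivity
  have hs0 : 0 < Real.sqrt (c + y ^ 2) := Real.sqrt_pos.2 hcy
  have hss : Real.sqrt (c + y ^ 2) ^ 2 = c + y ^ 2 := Real.sq_sqrt hcy.le
  have h1 : HasDerivAt (fun y : ℝ => c + y ^ 2) (2 * y) y := by
    simpa using ((hasDerivAt_pow 2 y).const_add c)
  have h2 : HasDerivAt (fun y : ℝ => Real.sqrt (c + y ^ 2))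
      (y / Real.sqrt (c + y ^ 2)) y := by
    have := (Real.hasDerivAt_sqrt (ne_of_gt hcy)).comp y h1
    refine this.congr_deriv (Eq.symm ?_)
    field_simp
  have h3 := (hasDerivAt_id y).div (h2.const_mul c)
    (ne_of_gt (by positivity : (0:ℝ) < c * Real.sqrt (c + y ^ 2)))
  refine h3.congr_deriv (Eq.symm ?_)
  have hs3 : Real.sqrt (c + y ^ 2) ^ 3 = (c + y ^ 2) ^ ((3:ℝ)/2) := by
    rw [Real.sqrt_eq_rpow, ← Real.rpow_natCast _ 3, ← Real.rpow_mul hcy.le]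
    norm_num
  rw [show (-(3:ℝ)/2) = -((3:ℝ)/2) by norm_num, Real.rpow_neg hcy.le, ← hs3]
  field_simp
  simp only [id_eq]
  linear_combination (-1) * hss

lemma inner_tendsto (c : ℝ) (hc : 0 < c) :
    Tendsto (fun y : ℝ => y / (c * Real.sqrt (c + y ^ 2))) atTop (𝓝 (1/c)) := by
  have h := (lim1 c hc).div_const c
  simp only [one_div] at h ⊢
  refine h.congr (fun y => ?_)
  rw [div_div, mul_comm]

lemma inner_integrable (c b : ℝ) (hc : 0 < c) :
    IntegrableOn (fun y : ℝ => (c + y ^ 2) ^ (-(3:ℝ)/2)) (Ioi b) volume :=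
  integrableOn_Ioi_deriv_of_nonneg' (fun x _ => hasDeriv_inner c hc x)
    (fun x _ => Real.rpow_nonneg (by positivity) _) (inner_tendsto c hc)

lemma inner_integral (c b : ℝ) (hc : 0 < c) :
    ∫ y in Ioi b, (c + y ^ 2) ^ (-(3:ℝ)/2) = 1/c - b / (c * Real.sqrt (c + b ^ 2)) :=
  integral_Ioi_of_hasDerivAt_of_tendsto' (fun x _ => hasDeriv_inner c hc x)
    (inner_integrable c b hc) (inner_tendsto c hc)


lemma outer_deriv (b : ℝ) (x : ℝ) :
    HasDerivAt (fun x : ℝ => Real.arctan x - Real.arctan (b * x / Real.sqrt (1 + x ^ 2 + b ^ 2)))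
      (1 / (1 + x ^ 2) - b / ((1 + x ^ 2) * Real.sqrt (1 + x ^ 2 + b ^ 2))) x := by
  have hcy : (0:ℝ) < 1 + x ^ 2 + b ^ 2 := by positivity
  have hs0 : 0 < Real.sqrt (1 + x ^ 2 + b ^ 2) := Real.sqrt_pos.2 hcy
  have hss : Real.sqrt (1 + x ^ 2 + b ^ 2) ^ 2 = 1 + x ^ 2 + b ^ 2 := Real.sq_sqrt hcy.le
  have h1 : HasDerivAt (fun x : ℝ => 1 + x ^ 2 + b ^ 2) (2 * x) x := by
    simpa using (((hasDerivAt_pow 2 x).const_add 1).add_const (b ^ 2))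
  have h2 : HasDerivAt (fun x : ℝ => Real.sqrt (1 + x ^ 2 + b ^ 2))
      (x / Real.sqrt (1 + x ^ 2 + b ^ 2)) x := by
    have := (Real.hasDerivAt_sqrt (ne_of_gt hcy)).comp x h1
    refine this.congr_deriv (Eq.symm ?_)
    field_simp
  have h3 := ((hasDerivAt_id x).const_mul b).div h2 (ne_of_gt hs0)
  have h4 := (Real.hasDerivAt_arctan x).sub h3.arctan
  refine h4.congr_deriv (Eq.symm ?_)
  have hd : 1 + (b * x / Real.sqrt (1 + x ^ 2 + b ^ 2)) ^ 2
      = ((1 + x ^ 2 + b ^ 2) + b ^ 2 * x ^ 2) / (1 + x ^ 2 + b ^ 2) := by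
    field_simp [hss]
    rw [hss]
  simp only [id_eq, mul_one] at h4 ⊢
  simp only [Pi.div_apply]
  rw [hd]
  set s := Real.sqrt (1 + x ^ 2 + b ^ 2) with hsdef
  field_simp
  linear_combination (b * x ^ 2 * (1 + x ^ 2)) * hss

lemma outer_tendsto (b : ℝ) :
    Tendsto (fun x : ℝ => Real.arctan x - Real.arctan (b * x / Real.sqrt (1 + x ^ 2 + b ^ 2)))
      atTop (𝓝 (π / 2 - Real.arctan b)) := by
  have h1 : Tendsto Real.arctan atTop (𝓝 (π / 2)) :=
    Real.tendsto_arctan_atTop.mono_right nhdsWithin_le_nhds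
  have h2 : Tendsto (fun x : ℝ => b * x / Real.sqrt (1 + x ^ 2 + b ^ 2)) atTop (𝓝 b) := by
    have := ((lim1 (1 + b ^ 2) (by positivity)).const_mul b)
    rw [mul_one] at this
    refine this.congr (fun x => ?_)
    rw [show (1 + b ^ 2) + x ^ 2 = 1 + x ^ 2 + b ^ 2 by ring]
    ring
  exact h1.sub ((Real.continuous_arctan.tendsto b).comp h2)

lemma outer_nonneg (b : ℝ) (hb : 0 ≤ b) (x : ℝ) :
    0 ≤ 1 / (1 + x ^ 2) - b / ((1 + x ^ 2) * Real.sqrt (1 + x ^ 2 + b ^ 2)) := by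
  have hcy : (0:ℝ) < 1 + x ^ 2 + b ^ 2 := by positivity
  have hs0 : 0 < Real.sqrt (1 + x ^ 2 + b ^ 2) := Real.sqrt_pos.2 hcy
  have hbs : b ≤ Real.sqrt (1 + x ^ 2 + b ^ 2) := by
    nlinarith [Real.sq_sqrt hcy.le, Real.sqrt_nonneg (1 + x ^ 2 + b ^ 2),
      sq_nonneg (Real.sqrt (1 + x ^ 2 + b ^ 2) - b), sq_nonneg x]
  rw [sub_nonneg, div_le_div_iff₀ (by positivity) (by positivity)]
  nlinarith [sq_nonneg x]

lemma outer_integrable (a b : ℝ) (hb : 0 ≤ b) :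
    IntegrableOn (fun x : ℝ =>
      1 / (1 + x ^ 2) - b / ((1 + x ^ 2) * Real.sqrt (1 + x ^ 2 + b ^ 2))) (Ioi a) volume :=
  integrableOn_Ioi_deriv_of_nonneg' (fun x _ => outer_deriv b x)
    (fun x _ => outer_nonneg b hb x) (outer_tendsto b)

lemma outer_integral (a b : ℝ) (hb : 0 ≤ b) :
    ∫ x in Ioi a, (1 / (1 + x ^ 2) - b / ((1 + x ^ 2) * Real.sqrt (1 + x ^ 2 + b ^ 2)))
      = π / 2 - Real.arctan b - Real.arctan a
        + Real.arctan (a * b / Real.sqrt (1 + a ^ 2 + b ^ 2)) := by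
  rw [integral_Ioi_of_hasDerivAt_of_tendsto' (fun x _ => outer_deriv b x)
    (outer_integrable a b hb) (outer_tendsto b)]
  rw [mul_comm b a]
  ring

lemma key_lintegral (a b : ℝ) (ha : 0 ≤ a) (hb : 0 ≤ b) :
    ∫⁻ z in Ioi a ×ˢ Ioi b,
        ENNReal.ofReal (2 / π * (1 + z.1 ^ 2 + z.2 ^ 2) ^ (-(3:ℝ)/2)) ∂volume
      = ENNReal.ofReal (2 / π * (π / 2 - Real.arctan a - Real.arctan b
          + Real.arctan (a * b / Real.sqrt (1 + a ^ 2 + b ^ 2)))) := by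
  have hmeas : Measurable fun z : ℝ × ℝ =>
      ENNReal.ofReal (2 / π * (1 + z.1 ^ 2 + z.2 ^ 2) ^ (-(3:ℝ)/2)) := by
    measurability
  have hin : ∀ x : ℝ,
      ∫⁻ y in Ioi b, ENNReal.ofReal (2 / π * (1 + x ^ 2 + y ^ 2) ^ (-(3:ℝ)/2))
        = ENNReal.ofReal (2 / π *
            (1 / (1 + x ^ 2) - b / ((1 + x ^ 2) * Real.sqrt (1 + x ^ 2 + b ^ 2)))) := by
    intro x
    rw [← MeasureTheory.ofReal_integral_eq_lintegral_ofReal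
      (((inner_integrable (1 + x ^ 2) b (by positivity)).const_mul (2 / π)))
      (Filter.Eventually.of_forall fun y => by positivity)]
    rw [MeasureTheory.integral_const_mul, inner_integral (1 + x ^ 2) b (by positivity)]
  calc ∫⁻ z in Ioi a ×ˢ Ioi b,
        ENNReal.ofReal (2 / π * (1 + z.1 ^ 2 + z.2 ^ 2) ^ (-(3:ℝ)/2)) ∂volume
      = ∫⁻ z, ENNReal.ofReal (2 / π * (1 + z.1 ^ 2 + z.2 ^ 2) ^ (-(3:ℝ)/2))
          ∂((volume.restrict (Ioi a)).prod (volume.restrict (Ioi b))) := by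
        rw [Measure.prod_restrict, ← Measure.volume_eq_prod]
    _ = ∫⁻ x in Ioi a, ∫⁻ y in Ioi b,
          ENNReal.ofReal (2 / π * (1 + x ^ 2 + y ^ 2) ^ (-(3:ℝ)/2)) ∂volume ∂volume := by
        rw [MeasureTheory.lintegral_prod _ hmeas.aemeasurable]
    _ = ∫⁻ x in Ioi a, ENNReal.ofReal (2 / π *
          (1 / (1 + x ^ 2) - b / ((1 + x ^ 2) * Real.sqrt (1 + x ^ 2 + b ^ 2)))) ∂volume := by
        simp_rw [hin]
    _ = ENNReal.ofReal (2 / π * (π / 2 - Real.arctan a - Real.arctan b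
          + Real.arctan (a * b / Real.sqrt (1 + a ^ 2 + b ^ 2)))) := by
        rw [← MeasureTheory.ofReal_integral_eq_lintegral_ofReal
          ((outer_integrable a b hb).const_mul (2 / π))
          (Filter.Eventually.of_forall fun x =>
            mul_nonneg (by positivity) (outer_nonneg b hb x))]
        rw [MeasureTheory.integral_const_mul, outer_integral a b hb]
        ring_nf



lemma ae_prod_eq (a b : ℝ) :
    ((Ici a ×ˢ Ici b : Set (ℝ × ℝ)) : Set (ℝ × ℝ)) =ᵐ[volume] (Ioi a ×ˢ Ioi b : Set (ℝ × ℝ)) := by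
  have h1 : volume (({a} : Set ℝ) ×ˢ (univ : Set ℝ)) = 0 := by
    rw [Measure.volume_eq_prod, Measure.prod_prod]; simp
  have h2 : volume ((univ : Set ℝ) ×ˢ ({b} : Set ℝ)) = 0 := by
    rw [Measure.volume_eq_prod, Measure.prod_prod]; simp
  rw [MeasureTheory.ae_eq_set]
  constructor
  · refine measure_mono_null ?_ (measure_union_null h1 h2)
    rintro ⟨u, v⟩ ⟨⟨hu, hv⟩, hn⟩
    simp only [mem_prod, mem_Ioi, not_and, mem_Ici, mem_union, mem_singleton_iff, mem_univ,
      and_true, true_and] at *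
    rcases eq_or_lt_of_le hu with h | h
    · exact Or.inl h.symm
    · rcases eq_or_lt_of_le hv with h' | h'
      · exact Or.inr h'.symm
      · exact absurd h' (hn h)
  · rw [diff_eq_empty.2 (Set.prod_mono Ioi_subset_Ici_self Ioi_subset_Ici_self)]
    exact measure_empty

section Prob
variable {Ω : Type*} [MeasurableSpace Ω] (P : Measure Ω) [IsProbabilityMeasure P]
    (X Y : Ω → ℝ) (hX : Measurable X) (hY : Measurable Y)
    (hdens : ∀ B : Set (ℝ × ℝ), MeasurableSet B →
      P {ω | (X ω, Y ω) ∈ B} =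
        ∫⁻ z in B ∩ Ioi 0 ×ˢ Ioi 0,
          ENNReal.ofReal (2 / π * (1 + z.1 ^ 2 + z.2 ^ 2) ^ (-(3 : ℝ) / 2)) ∂volume)

include hdens in
lemma surv (a b : ℝ) (ha : 0 < a) (hb : 0 < b) :
    P {ω | a ≤ X ω ∧ b ≤ Y ω}
      = ENNReal.ofReal (2 / π * (π / 2 - Real.arctan a - Real.arctan b
          + Real.arctan (a * b / Real.sqrt (1 + a ^ 2 + b ^ 2)))) := by
  have hB : MeasurableSet (Ici a ×ˢ Ici b : Set (ℝ × ℝ)) :=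
    measurableSet_Ici.prod measurableSet_Ici
  have hset : {ω | (X ω, Y ω) ∈ (Ici a ×ˢ Ici b : Set (ℝ × ℝ))} = {ω | a ≤ X ω ∧ b ≤ Y ω} := by
    ext ω; simp [Set.mem_prod]
  rw [← hset, hdens _ hB]
  have hsub : (Ici a ×ˢ Ici b : Set (ℝ × ℝ)) ∩ Ioi 0 ×ˢ Ioi 0 = Ici a ×ˢ Ici b := by
    rw [Set.prod_inter_prod]
    rw [inter_eq_left.2 (Ici_subset_Ioi.2 ha), inter_eq_left.2 (Ici_subset_Ioi.2 hb)]
  rw [hsub, MeasureTheory.setLIntegral_congr (ae_prod_eq a b),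
    key_lintegral a b ha.le hb.le]

include hdens in
lemma marg_tail_X (x : ℝ) (hx : 0 < x) :
    P {ω | x < X ω} = ENNReal.ofReal (2 / π * (π / 2 - Real.arctan x)) := by
  have hB : MeasurableSet ((Ioi x ×ˢ (univ : Set ℝ)) : Set (ℝ × ℝ)) :=
    measurableSet_Ioi.prod MeasurableSet.univ
  have hset : {ω | (X ω, Y ω) ∈ Ioi x ×ˢ (univ : Set ℝ)} = {ω | x < X ω} := by
    ext ω; simp
  rw [← hset, hdens _ hB]
  have hsub : (Ioi x ×ˢ (univ : Set ℝ)) ∩ Ioi 0 ×ˢ Ioi 0 = Ioi x ×ˢ Ioi 0 := by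
    rw [Set.prod_inter_prod, inter_eq_left.2 (Ioi_subset_Ioi hx.le), univ_inter]
  rw [hsub, key_lintegral x 0 hx.le le_rfl]
  norm_num

include hdens in
lemma marg_tail_Y (x : ℝ) (hx : 0 < x) :
    P {ω | x < Y ω} = ENNReal.ofReal (2 / π * (π / 2 - Real.arctan x)) := by
  have hB : MeasurableSet (((univ : Set ℝ) ×ˢ Ioi x) : Set (ℝ × ℝ)) :=
    MeasurableSet.univ.prod measurableSet_Ioi
  have hset : {ω | (X ω, Y ω) ∈ (univ : Set ℝ) ×ˢ Ioi x} = {ω | x < Y ω} := by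
    ext ω; simp
  rw [← hset, hdens _ hB]
  have hsub : ((univ : Set ℝ) ×ˢ Ioi x) ∩ Ioi 0 ×ˢ Ioi 0 = Ioi 0 ×ˢ Ioi x := by
    rw [Set.prod_inter_prod, inter_eq_left.2 (Ioi_subset_Ioi hx.le), univ_inter]
  rw [hsub, key_lintegral 0 x le_rfl hx.le]
  norm_num

include hX hdens in
lemma marg_X (x : ℝ) (hx : 0 < x) :
    P {ω | X ω ≤ x} = ENNReal.ofReal (2 / π * Real.arctan x) := by
  have hc : {ω | X ω ≤ x} = {ω | x < X ω}ᶜ := by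
    ext ω; simp
  rw [hc, measure_compl (show MeasurableSet {ω | x < X ω} from hX measurableSet_Ioi) (measure_ne_top P _), measure_univ,
    marg_tail_X P X Y hdens x hx, ← ENNReal.ofReal_one,
    ← ENNReal.ofReal_sub _ (mul_nonneg (by positivity)
      (sub_nonneg.2 (Real.arctan_lt_pi_div_two x).le))]
  congr 1
  have hπ : π ≠ 0 := Real.pi_ne_zero
  field_simp
  ring

include hY hdens in
lemma marg_Y (x : ℝ) (hx : 0 < x) :
    P {ω | Y ω ≤ x} = ENNReal.ofReal (2 / π * Real.arctan x) := by
  have hc : {ω | Y ω ≤ x} = {ω | x < Y ω}ᶜ := by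
    ext ω; simp
  rw [hc, measure_compl (show MeasurableSet {ω | x < Y ω} from hY measurableSet_Ioi) (measure_ne_top P _), measure_univ,
    marg_tail_Y P X Y hdens x hx, ← ENNReal.ofReal_one,
    ← ENNReal.ofReal_sub _ (mul_nonneg (by positivity)
      (sub_nonneg.2 (Real.arctan_lt_pi_div_two x).le))]
  congr 1
  have hπ : π ≠ 0 := Real.pi_ne_zero
  field_simp
  ring

end Prob


-- slope limits
lemma tan_slope : Tendsto (fun s : ℝ => Real.tan s / s) (𝓝[≠] (0:ℝ)) (𝓝 1) := by
  have h := Real.hasDerivAt_tan (x := 0) (by simp)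
  rw [hasDerivAt_iff_tendsto_slope] at h
  simp only [Real.cos_zero, one_pow, div_one] at h
  refine h.congr (fun s => ?_)
  rw [slope_def_field, Real.tan_zero, sub_zero, sub_zero]

lemma arctan_slope : Tendsto (fun s : ℝ => Real.arctan s / s) (𝓝[≠] (0:ℝ)) (𝓝 1) := by
  have h := Real.hasDerivAt_arctan 0
  rw [hasDerivAt_iff_tendsto_slope] at h
  norm_num at h
  refine h.congr (fun s => ?_)
  rw [slope_def_field, Real.arctan_zero, sub_zero, sub_zero]

lemma tan_lim (c : ℝ) (hc : 0 < c) :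
    Tendsto (fun t : ℝ => Real.tan (c * t) / t) (𝓝[>] (0:ℝ)) (𝓝 c) := by
  have hm : Tendsto (fun t : ℝ => c * t) (𝓝[>] (0:ℝ)) (𝓝[≠] (0:ℝ)) := by
    rw [tendsto_nhdsWithin_iff]
    constructor
    · have : Tendsto (fun t : ℝ => c * t) (𝓝 (0:ℝ)) (𝓝 (c * 0)) :=
        (continuous_const.mul continuous_id).tendsto 0
      simpa using this.mono_left nhdsWithin_le_nhds
    · filter_upwards [self_mem_nhdsWithin] with t ht
      exact (mul_pos hc ht).ne'
  have := (tan_slope.comp hm).mul_const c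
  rw [one_mul] at this
  refine this.congr' ?_
  filter_upwards [self_mem_nhdsWithin] with t (ht : 0 < t)
  have : c * t ≠ 0 := (mul_pos hc ht).ne'
  simp only [Function.comp_apply]
  field_simp

lemma key_tendsto (x y : ℝ) (hx : 0 < x) (hy : 0 < y) :
    Tendsto (fun t : ℝ => t⁻¹ * Real.arctan (Real.sqrt
      (Real.tan (π/2*x*t)^2 * Real.tan (π/2*y*t)^2
        + Real.tan (π/2*x*t)^2 + Real.tan (π/2*y*t)^2)))
      (𝓝[>] (0:ℝ)) (𝓝 (π/2 * Real.sqrt (x^2+y^2))) := by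
  set W := fun t : ℝ => Real.sqrt (Real.tan (π/2*x*t)^2 * Real.tan (π/2*y*t)^2
      + Real.tan (π/2*x*t)^2 + Real.tan (π/2*y*t)^2) with hWdef
  have hδpos : 0 < min x⁻¹ y⁻¹ := lt_min (by positivity) (by positivity)
  have hIoo : Ioo (0:ℝ) (min x⁻¹ y⁻¹) ∈ 𝓝[>] (0:ℝ) :=
    Ioo_mem_nhdsGT_of_mem (left_mem_Ico.2 hδpos)
  have hWpos : ∀ᶠ t in 𝓝[>] (0:ℝ), 0 < W t := by
    filter_upwards [hIoo] with t ht
    have h1 : 0 < Real.tan (π/2*x*t) := by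
      apply Real.tan_pos_of_pos_of_lt_pi_div_two (mul_pos (mul_pos (half_pos Real.pi_pos) hx) ht.1)
      have : x * t < 1 := by
        have := ht.2
        calc x * t < x * x⁻¹ := by
              apply mul_lt_mul_of_pos_left (lt_of_lt_of_le (lt_min_iff.1 this).1 le_rfl) hx
          _ = 1 := mul_inv_cancel₀ hx.ne'
      nlinarith [Real.pi_pos]
    apply Real.sqrt_pos.2
    nlinarith [sq_nonneg (Real.tan (π/2*y*t)), sq_nonneg (Real.tan (π/2*x*t) * Real.tan (π/2*y*t))]
  have hp := tan_lim (π/2*x) (by positivity)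
  have hq := tan_lim (π/2*y) (by positivity)
  have ht2 : Tendsto (fun t : ℝ => t^2) (𝓝[>] (0:ℝ)) (𝓝 0) := by
    have : Tendsto (fun t : ℝ => t^2) (𝓝 (0:ℝ)) (𝓝 ((0:ℝ)^2)) := (continuous_pow 2).tendsto 0
    simpa using this.mono_left nhdsWithin_le_nhds
  have hWt : Tendsto (fun t => W t / t) (𝓝[>] (0:ℝ)) (𝓝 (π/2 * Real.sqrt (x^2+y^2))) := by
    have hin := (((ht2.mul (hp.pow 2)).mul (hq.pow 2)).add (hp.pow 2)).add (hq.pow 2)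
    have hs := hin.sqrt
    have hval : Real.sqrt (0 * (π/2*x)^2 * (π/2*y)^2 + (π/2*x)^2 + (π/2*y)^2)
        = π/2 * Real.sqrt (x^2+y^2) := by
      rw [zero_mul, zero_mul, zero_add,
        show (π/2*x)^2 + (π/2*y)^2 = (π/2)^2 * (x^2+y^2) by ring,
        Real.sqrt_mul (sq_nonneg _), Real.sqrt_sq (half_pos Real.pi_pos).le]
    rw [hval] at hs
    refine hs.congr' ?_
    filter_upwards [self_mem_nhdsWithin] with t (ht : 0 < t)
    have hnn : 0 ≤ Real.tan (π/2*x*t)^2 * Real.tan (π/2*y*t)^2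
        + Real.tan (π/2*x*t)^2 + Real.tan (π/2*y*t)^2 := by positivity
    rw [hWdef]
    simp only
    rw [show W t / t = W t / Real.sqrt (t^2) by rw [Real.sqrt_sq ht.le]]
    rw [hWdef]
    simp only
    rw [← Real.sqrt_div hnn]
    congr 1
    field_simp
  have hW0 : Tendsto W (𝓝[>] (0:ℝ)) (𝓝[≠] (0:ℝ)) := by
    rw [tendsto_nhdsWithin_iff]
    constructor
    · have h0 : Tendsto (fun t : ℝ => t) (𝓝[>] (0:ℝ)) (𝓝 0) :=
        tendsto_id.mono_left nhdsWithin_le_nhds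
      have := hWt.mul h0
      rw [mul_zero] at this
      refine this.congr' ?_
      filter_upwards [self_mem_nhdsWithin] with t (ht : 0 < t)
      field_simp
    · filter_upwards [hWpos] with t ht
      exact ht.ne'
  have hfinal := (arctan_slope.comp hW0).mul hWt
  rw [one_mul] at hfinal
  refine hfinal.congr' ?_
  filter_upwards [hWpos, self_mem_nhdsWithin] with t hW (ht : 0 < t)
  simp only [Function.comp]
  rw [div_mul_div_comm, mul_comm (Real.arctan (W t)) (W t),
    mul_div_mul_left _ _ hW.ne', inv_mul_eq_div]



lemma g_nonneg (a b : ℝ) (hb : 0 ≤ b) :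
    0 ≤ π / 2 - Real.arctan a - Real.arctan b
        + Real.arctan (a * b / Real.sqrt (1 + a ^ 2 + b ^ 2)) := by
  have h := MeasureTheory.setIntegral_nonneg (μ := volume) (measurableSet_Ioi (a := a))
    (fun x _ => outer_nonneg b hb x)
  rw [outer_integral a b hb] at h
  linarith

lemma cond_iff (u c : ℝ) (hc0 : 0 < c) (hc1 : c < 1) :
    1 - 2 / π * Real.arctan u ≤ c ↔ Real.tan (π / 2 * (1 - c)) ≤ u := by
  have hθ1 : -(π / 2) < π / 2 * (1 - c) := by nlinarith [Real.pi_pos]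
  have hθ2 : π / 2 * (1 - c) < π / 2 := by nlinarith [Real.pi_pos]
  have h1 : Real.tan (π / 2 * (1 - c)) ≤ u
      ↔ Real.arctan (Real.tan (π / 2 * (1 - c))) ≤ Real.arctan u :=
    (Real.arctan_strictMono.le_iff_le).symm
  rw [h1, Real.arctan_tan hθ1 hθ2]
  have hπ := Real.pi_pos
  constructor <;> intro h
  · have e : π/2*(1 - 2/π*Real.arctan u) = π/2 - Real.arctan u := by
      field_simp
    have h' := mul_le_mul_of_nonneg_left h (le_of_lt (half_pos hπ))
    rw [e] at h'
    linarith
  · have e2 : 2/π*(π/2*(1-c)) = 1 - c := by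
      field_simp
    have h' := mul_le_mul_of_nonneg_left h (le_of_lt (div_pos two_pos hπ))
    rw [e2] at h'
    linarith

set_option maxHeartbeats 1000000 in
theorem stmt14 {Ω : Type*} [MeasurableSpace Ω] (P : Measure Ω) [IsProbabilityMeasure P]
    (X Y : Ω → ℝ) (hX : Measurable X) (hY : Measurable Y)
    (hdens : ∀ B : Set (ℝ × ℝ), MeasurableSet B →
      P {ω | (X ω, Y ω) ∈ B} =
        ∫⁻ z in B ∩ Ioi 0 ×ˢ Ioi 0,
          ENNReal.ofReal (2 / π * (1 + z.1 ^ 2 + z.2 ^ 2) ^ (-(3 : ℝ) / 2)) ∂volume) :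
    (∀ x > (0 : ℝ),
      P {ω | X ω ≤ x} = ENNReal.ofReal (2 / π * Real.arctan x) ∧
      P {ω | Y ω ≤ x} = ENNReal.ofReal (2 / π * Real.arctan x)) ∧
    ∀ x > (0 : ℝ), ∀ y > (0 : ℝ),
      Tendsto (fun t : ℝ =>
          t⁻¹ * (P {ω | 1 - 2 / π * Real.arctan (X ω) ≤ t * x ∧
                        1 - 2 / π * Real.arctan (Y ω) ≤ t * y}).toReal)
        (𝓝[>] 0) (𝓝 (x + y - Real.sqrt (x ^ 2 + y ^ 2))) := by
  constructor
  · exact fun x hx => ⟨marg_X P X Y hX hdens x hx, marg_Y P X Y hY hdens x hx⟩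
  intro x hx y hy
  have hπ := Real.pi_pos
  have hmain : Tendsto (fun t : ℝ => x + y - 2 / π * (t⁻¹ * Real.arctan (Real.sqrt
      (Real.tan (π/2*x*t)^2 * Real.tan (π/2*y*t)^2
        + Real.tan (π/2*x*t)^2 + Real.tan (π/2*y*t)^2))))
      (𝓝[>] (0:ℝ)) (𝓝 (x + y - Real.sqrt (x ^ 2 + y ^ 2))) := by
    have h := Tendsto.sub
      (tendsto_const_nhds : Tendsto (fun _ : ℝ => x + y) (𝓝[>] (0:ℝ)) (𝓝 (x + y)))
      ((key_tendsto x y hx hy).const_mul (2/π))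
    have heq : x + y - 2/π * (π/2 * Real.sqrt (x^2+y^2)) = x + y - Real.sqrt (x^2+y^2) := by
      field_simp
    rwa [heq] at h
  refine hmain.congr' ?_
  have hδpos : 0 < min x⁻¹ y⁻¹ := lt_min (by positivity) (by positivity)
  filter_upwards [Ioo_mem_nhdsGT_of_mem (left_mem_Ico.2 hδpos)] with t ht
  obtain ⟨ht0, htδ⟩ := ht
  have htx1 : t * x < 1 := by
    have h1 : t < x⁻¹ := lt_of_lt_of_le htδ (min_le_left _ _)
    calc t * x < x⁻¹ * x := by exact mul_lt_mul_of_pos_right h1 hx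
      _ = 1 := inv_mul_cancel₀ hx.ne'
  have hty1 : t * y < 1 := by
    have h1 : t < y⁻¹ := lt_of_lt_of_le htδ (min_le_right _ _)
    calc t * y < y⁻¹ * y := by exact mul_lt_mul_of_pos_right h1 hy
      _ = 1 := inv_mul_cancel₀ hy.ne'
  have htx0 : 0 < t * x := mul_pos ht0 hx
  have hty0 : 0 < t * y := mul_pos ht0 hy
  set a := Real.tan (π / 2 * (1 - t * x)) with hadef
  set b := Real.tan (π / 2 * (1 - t * y)) with hbdef
  have ha : 0 < a := Real.tan_pos_of_pos_of_lt_pi_div_two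
    (by nlinarith) (by nlinarith)
  have hb : 0 < b := Real.tan_pos_of_pos_of_lt_pi_div_two
    (by nlinarith) (by nlinarith)
  have hev : {ω | 1 - 2 / π * Real.arctan (X ω) ≤ t * x ∧
      1 - 2 / π * Real.arctan (Y ω) ≤ t * y} = {ω | a ≤ X ω ∧ b ≤ Y ω} := by
    ext ω
    simp only [mem_setOf_eq]
    rw [cond_iff (X ω) (t*x) htx0 htx1, cond_iff (Y ω) (t*y) hty0 hty1]
  rw [hev, surv P X Y hdens a b ha hb,
    ENNReal.toReal_ofReal (mul_nonneg (by positivity) (g_nonneg a b hb.le))]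
  have harca : Real.arctan a = π / 2 * (1 - t * x) :=
    Real.arctan_tan (by nlinarith) (by nlinarith)
  have harcb : Real.arctan b = π / 2 * (1 - t * y) :=
    Real.arctan_tan (by nlinarith) (by nlinarith)
  have hS : (0:ℝ) < Real.sqrt (1 + a ^ 2 + b ^ 2) := Real.sqrt_pos.2 (by positivity)
  have hv : 0 < a * b / Real.sqrt (1 + a ^ 2 + b ^ 2) := div_pos (mul_pos ha hb) hS
  have hWeq : (a * b / Real.sqrt (1 + a ^ 2 + b ^ 2))⁻¹
      = Real.sqrt (Real.tan (π/2*x*t)^2 * Real.tan (π/2*y*t)^2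
        + Real.tan (π/2*x*t)^2 + Real.tan (π/2*y*t)^2) := by
    have h1 : Real.tan (π/2*x*t) = a⁻¹ := by
      rw [show π/2*x*t = π/2 - π/2*(1 - t*x) by ring, Real.tan_pi_div_two_sub, hadef]
    have h2 : Real.tan (π/2*y*t) = b⁻¹ := by
      rw [show π/2*y*t = π/2 - π/2*(1 - t*y) by ring, Real.tan_pi_div_two_sub, hbdef]
    rw [h1, h2,
      show (a⁻¹)^2 * (b⁻¹)^2 + (a⁻¹)^2 + (b⁻¹)^2 = (1 + a^2 + b^2) / (a*b)^2 by
        field_simp; ring,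
      Real.sqrt_div (by positivity) ((a*b)^2), Real.sqrt_sq (mul_pos ha hb).le, inv_div]
  have harcv : Real.arctan (a * b / Real.sqrt (1 + a ^ 2 + b ^ 2))
      = π / 2 - Real.arctan (Real.sqrt (Real.tan (π/2*x*t)^2 * Real.tan (π/2*y*t)^2
        + Real.tan (π/2*x*t)^2 + Real.tan (π/2*y*t)^2)) := by
    have := Real.arctan_inv_of_pos hv
    rw [hWeq] at this
    linarith
  rw [harca, harcb, harcv]
  set A := Real.arctan (Real.sqrt (Real.tan (π/2*x*t)^2 * Real.tan (π/2*y*t)^2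
    + Real.tan (π/2*x*t)^2 + Real.tan (π/2*y*t)^2)) with hAdef
  field_simp
  ring
end
end

section
/- Fix p ∈ [1,∞]. For every θ ∈ (0,π/2), ∬_{{(x,y) ∈ (0,∞)² : y ≤ min(x·tanθ, y_p(x))}} x·y·(x² + y²)^{−3/2} dx dy = ∫₀^θ ‖(sinϑ, cosϑ)‖_p dϑ. (This identifies the spectral measure of the bivariate Cauchy model, whose limit measure Λ has density λ(x,y) = xy(x²+y²)^{−3/2} on (0,∞)², as Φ_p(θ) = ∫₀^θ ‖(sinϑ,cosϑ)‖_p dϑ.) -/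
open MeasureTheory Set Real Filter Topology
open scoped ENNReal

noncomputable section

/-- The `L_p` norm on `ℝ²`, for `p ∈ [1,∞]`. -/
def lpnorm (p : ℝ≥0∞) (z : ℝ × ℝ) : ℝ :=
  if p = ⊤ then max |z.1| |z.2|
  else (|z.1| ^ p.toReal + |z.2| ^ p.toReal) ^ (1 / p.toReal)

/-- The function `y_p : [0,∞) → [0,∞]`: for `p < ∞`, `y_p(x) = ∞` on `[0,1]` and
`y_p(x) = (1 + 1/(x^p - 1))^{1/p}` on `(1,∞)`; for `p = ∞`, `y_∞(x) = ∞` on `[0,1)`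
and `y_∞(x) = 1` on `[1,∞)`. -/
def ypR (p : ℝ≥0∞) (x : ℝ) : ℝ≥0∞ :=
  if p = ⊤ then (if x < 1 then ⊤ else 1)
  else if x ≤ 1 then ⊤
  else ENNReal.ofReal ((1 + 1 / (x ^ p.toReal - 1)) ^ (1 / p.toReal))

/- ### Auxiliary lemmas -/

lemma continuous_rpow_const' {c : ℝ} (hc : 0 ≤ c) :
    Continuous fun x : ℝ => x ^ c :=
  continuous_iff_continuousAt.2 fun x => Real.continuousAt_rpow_const x c (Or.inr hc)

lemma lpnorm_continuous (p : ℝ≥0∞) : Continuous (lpnorm p) := by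
  unfold lpnorm
  by_cases hp : p = ⊤
  · simp only [hp, if_true]
    exact continuous_fst.abs.max continuous_snd.abs
  · simp only [hp, if_false]
    have hc : (0:ℝ) ≤ p.toReal := ENNReal.toReal_nonneg
    exact (continuous_rpow_const' (by positivity)).comp
      (((continuous_rpow_const' hc).comp continuous_fst.abs).add
        ((continuous_rpow_const' hc).comp continuous_snd.abs))

lemma lpnorm_nonneg (p : ℝ≥0∞) (z : ℝ × ℝ) : 0 ≤ lpnorm p z := by
  unfold lpnorm
  by_cases hp : p = ⊤
  · simp only [hp, if_true]
    exact le_max_of_le_left (abs_nonneg _)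
  · simp only [hp, if_false]
    exact Real.rpow_nonneg (add_nonneg (Real.rpow_nonneg (abs_nonneg _) _)
      (Real.rpow_nonneg (abs_nonneg _) _)) _

lemma ypR_measurable (p : ℝ≥0∞) : Measurable (ypR p) := by
  unfold ypR
  by_cases hp : p = ⊤
  · simp only [hp, if_true]
    exact Measurable.ite measurableSet_Iio measurable_const measurable_const
  · simp only [hp, if_false]
    refine Measurable.ite measurableSet_Iic measurable_const ?_
    have m1 : Measurable fun x : ℝ => x ^ p.toReal :=
      (continuous_rpow_const' ENNReal.toReal_nonneg).measurable
    exact (((continuous_rpow_const' (by positivity)).measurable).comp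
      (measurable_const.add (measurable_const.div (m1.sub measurable_const)))).ennreal_ofReal

/-- Polar change of variables for the Lebesgue integral. -/
lemma lintegral_comp_polarCoord_symm' (f : ℝ × ℝ → ℝ≥0∞) :
    (∫⁻ q in polarCoord.target, ENNReal.ofReal q.1 * f (polarCoord.symm q)) = ∫⁻ z, f z := by
  exact lintegral_comp_polarCoord_symm f

lemma arith_iff {a b : ℝ} (ha : 1 < a) (hb : 0 < b) :
    b ≤ 1 + 1 / (a - 1) ↔ 1 ≤ a⁻¹ + b⁻¹ := by
  have hd : 0 < a - 1 := sub_pos.2 ha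
  have ha0 : 0 < a := lt_trans one_pos ha
  rw [show (1:ℝ) + 1 / (a - 1) = a / (a - 1) by field_simp; ring,
    le_div_iff₀ hd, inv_eq_one_div, inv_eq_one_div,
    div_add_div _ _ (ne_of_gt ha0) (ne_of_gt hb), le_div_iff₀ (mul_pos ha0 hb)]
  constructor <;> intro h <;> nlinarith

/-- Pivot characterization for finite `p`. -/
lemma cond_iff_fin (p : ℝ≥0∞) (hp : 1 ≤ p) (hptop : p ≠ ⊤) {x y : ℝ}
    (hx : 0 < x) (hy : 0 < y) :
    (ENNReal.ofReal y ≤ ypR p x) ↔ 1 ≤ x ^ (-p.toReal) + y ^ (-p.toReal) := by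
  have hc : (1:ℝ) ≤ p.toReal := by
    have := ENNReal.toReal_mono hptop hp; simpa using this
  have hc0 : (0:ℝ) < p.toReal := lt_of_lt_of_le one_pos hc
  set c := p.toReal with hcdef
  unfold ypR
  rw [if_neg hptop]
  by_cases h1 : x ≤ 1
  · rw [if_pos h1]
    simp only [le_top, true_iff]
    have hxc : x ^ c ≤ 1 := Real.rpow_le_one hx.le h1 hc0.le
    have hxcpos : 0 < x ^ c := Real.rpow_pos_of_pos hx c
    have h2 : 1 ≤ (x ^ c)⁻¹ := one_le_inv_iff₀.2 ⟨hxcpos, hxc⟩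
    have h3 : 0 ≤ y ^ (-c) := Real.rpow_nonneg hy.le _
    rw [Real.rpow_neg hx.le]
    linarith
  · rw [if_neg h1]
    push_neg at h1
    have hxc : 1 < x ^ c := (Real.one_lt_rpow_iff_of_pos hx).2 (Or.inl ⟨h1, hc0⟩)
    have hd : 0 < x ^ c - 1 := sub_pos.2 hxc
    have htpos : (0:ℝ) < 1 + 1 / (x ^ c - 1) := by positivity
    rw [ENNReal.ofReal_le_ofReal_iff (Real.rpow_nonneg htpos.le _), one_div c,
      ← Real.rpow_le_rpow_iff hy.le (Real.rpow_nonneg htpos.le _) hc0,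
      Real.rpow_inv_rpow htpos.le hc0.ne', arith_iff hxc (Real.rpow_pos_of_pos hy c),
      Real.rpow_neg hx.le, Real.rpow_neg hy.le]

/-- Pivot characterization of the radius bound for finite `p`. -/
lemma radius_iff_fin (p : ℝ≥0∞) (hp : 1 ≤ p) (hptop : p ≠ ⊤) {r ca sa : ℝ}
    (hr : 0 < r) (hca : 0 < ca) (hsa : 0 < sa) :
    r ≤ lpnorm p (1 / ca, 1 / sa) ↔
      1 ≤ (r * ca) ^ (-p.toReal) + (r * sa) ^ (-p.toReal) := by
  have hc : (1:ℝ) ≤ p.toReal := by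
    have := ENNReal.toReal_mono hptop hp; simpa using this
  have hc0 : (0:ℝ) < p.toReal := lt_of_lt_of_le one_pos hc
  set c := p.toReal with hcdef
  unfold lpnorm
  rw [if_neg hptop]
  have hA : (0:ℝ) < (1 / ca) ^ c + (1 / sa) ^ c := by positivity
  have e1 : |(1 / ca, 1 / sa).1| = 1 / ca := abs_of_pos (by positivity)
  have e2 : |(1 / ca, 1 / sa).2| = 1 / sa := abs_of_pos (by positivity)
  rw [e1, e2, one_div c, ← Real.rpow_le_rpow_iff hr.le (Real.rpow_nonneg hA.le _) hc0,
    Real.rpow_inv_rpow hA.le hc0.ne']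
  have key : ∀ t : ℝ, 0 < t → (r * t) ^ (-c) = (r ^ c)⁻¹ * (t ^ c)⁻¹ := by
    intro t ht
    rw [Real.rpow_neg (by positivity), Real.mul_rpow hr.le ht.le, mul_inv]
  rw [key ca hca, key sa hsa, one_div ca, one_div sa, Real.inv_rpow hca.le,
    Real.inv_rpow hsa.le, ← mul_add, inv_mul_eq_div, one_le_div₀ (Real.rpow_pos_of_pos hr c)]

/-- Characterization for `p = ∞`. -/
lemma cond_iff_top {x y : ℝ} (hy : 0 < y) :
    (ENNReal.ofReal y ≤ ypR ⊤ x) ↔ (x < 1 ∨ y ≤ 1) := by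
  unfold ypR
  rw [if_pos rfl]
  by_cases h : x < 1
  · simp [h]
  · simp [h, ENNReal.ofReal_le_one]

lemma radius_iff_top {r ca sa : ℝ} (hr : 0 < r) (hca : 0 < ca) (hsa : 0 < sa) :
    r ≤ lpnorm ⊤ (1 / ca, 1 / sa) ↔ (r * ca ≤ 1 ∨ r * sa ≤ 1) := by
  unfold lpnorm
  rw [if_pos rfl]
  have e1 : |(1 / ca, 1 / sa).1| = 1 / ca := abs_of_pos (by positivity)
  have e2 : |(1 / ca, 1 / sa).2| = 1 / sa := abs_of_pos (by positivity)
  rw [e1, e2, le_max_iff, le_div_iff₀ hca, le_div_iff₀ hsa]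

/-- Combined radius characterization, valid away from the line `x = 1`. -/
lemma cond_iff_radius (p : ℝ≥0∞) (hp : 1 ≤ p) {r ca sa : ℝ}
    (hr : 0 < r) (hca : 0 < ca) (hsa : 0 < sa) (hne : r * ca ≠ 1) :
    (ENNReal.ofReal (r * sa) ≤ ypR p (r * ca)) ↔ r ≤ lpnorm p (1 / ca, 1 / sa) := by
  by_cases hptop : p = ⊤
  · subst hptop
    rw [cond_iff_top (by positivity), radius_iff_top hr hca hsa]
    constructor
    · rintro (h | h)
      · exact Or.inl h.le
      · exact Or.inr h
    · rintro (h | h)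
      · exact Or.inl (lt_of_le_of_ne h hne)
      · exact Or.inr h
  · rw [cond_iff_fin p hp hptop (by positivity) (by positivity),
      radius_iff_fin p hp hptop hr hca hsa]

/-- The angle characterization. -/
lemma angle_iff {θ r φ : ℝ} (hθ : θ ∈ Ioo 0 (π/2)) (hr : 0 < r)
    (hφ0 : 0 < φ) (hφ2 : φ < π/2) :
    r * Real.sin φ ≤ r * Real.cos φ * Real.tan θ ↔ φ ≤ θ := by
  have hφmem : φ ∈ Ioo (-(π/2)) (π/2) := ⟨by linarith [pi_pos], hφ2⟩
  have hθmem : θ ∈ Ioo (-(π/2)) (π/2) := ⟨by linarith [pi_pos, hθ.1], hθ.2⟩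
  have hcos : 0 < Real.cos φ := Real.cos_pos_of_mem_Ioo hφmem
  rw [mul_assoc, mul_le_mul_iff_right₀ hr, ← Real.strictMonoOn_tan.le_iff_le hφmem hθmem,
    Real.tan_eq_sin_div_cos φ, div_le_iff₀ hcos, mul_comm (Real.tan θ)]

/-- The key identity `cos φ · sin φ · ‖(1/cos φ, 1/sin φ)‖_p = ‖(sin φ, cos φ)‖_p`. -/
lemma key_identity (p : ℝ≥0∞) (hp : 1 ≤ p) {φ : ℝ} (hcos : 0 < Real.cos φ)
    (hsin : 0 < Real.sin φ) :
    Real.cos φ * Real.sin φ * lpnorm p (1 / Real.cos φ, 1 / Real.sin φ)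
      = lpnorm p (Real.sin φ, Real.cos φ) := by
  set ca := Real.cos φ
  set sa := Real.sin φ
  unfold lpnorm
  by_cases hptop : p = ⊤
  · simp only [hptop, if_true]
    rw [show |(1 / ca, 1 / sa).1| = 1 / ca from abs_of_pos (by positivity),
      show |(1 / ca, 1 / sa).2| = 1 / sa from abs_of_pos (by positivity),
      show |(sa, ca).1| = sa from abs_of_pos hsin,
      show |(sa, ca).2| = ca from abs_of_pos hcos,
      mul_max_of_nonneg _ _ (by positivity : (0:ℝ) ≤ ca * sa)]
    congr 1 <;> field_simp
  · simp only [hptop, if_false]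
    have hc1 : (1:ℝ) ≤ p.toReal := by
      have := ENNReal.toReal_mono hptop hp; simpa using this
    set c := p.toReal
    have hcpos : (0:ℝ) < c := lt_of_lt_of_le one_pos hc1
    have hc : c ≠ 0 := hcpos.ne'
    rw [show |(1 / ca, 1 / sa).1| = 1 / ca from abs_of_pos (by positivity),
      show |(1 / ca, 1 / sa).2| = 1 / sa from abs_of_pos (by positivity),
      show |(sa, ca).1| = sa from abs_of_pos hsin,
      show |(sa, ca).2| = ca from abs_of_pos hcos]
    have hA : (0:ℝ) ≤ (1 / ca) ^ c + (1 / sa) ^ c := by positivity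
    have e : ca * sa = ((ca * sa) ^ c) ^ (1/c) := by
      rw [one_div, Real.rpow_rpow_inv (by positivity) hc]
    rw [e, ← Real.mul_rpow (by positivity) hA]
    congr 1
    have h1 : ca ^ c ≠ 0 := by positivity
    have h2 : sa ^ c ≠ 0 := by positivity
    rw [Real.mul_rpow hcos.le hsin.le, one_div ca, one_div sa, Real.inv_rpow hcos.le,
      Real.inv_rpow hsin.le, mul_add]
    field_simp

theorem stmt15 (p : ℝ≥0∞) (hp : 1 ≤ p) :
    ∀ θ ∈ Ioo (0 : ℝ) (π / 2),
      (∫⁻ z in {z : ℝ × ℝ | 0 < z.1 ∧ 0 < z.2 ∧ z.2 ≤ z.1 * Real.tan θ ∧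
          ENNReal.ofReal z.2 ≤ ypR p z.1},
        ENNReal.ofReal (z.1 * z.2 * (z.1 ^ 2 + z.2 ^ 2) ^ (-(3 : ℝ) / 2)) ∂volume) =
      ENNReal.ofReal (∫ ϑ in (0 : ℝ)..θ, lpnorm p (Real.sin ϑ, Real.cos ϑ)) := by
  intro θ hθ
  obtain ⟨hθ0, hθ2⟩ := hθ
  set F : ℝ × ℝ → ℝ≥0∞ :=
    fun z => ENNReal.ofReal (z.1 * z.2 * (z.1 ^ 2 + z.2 ^ 2) ^ (-(3 : ℝ) / 2)) with hF
  set S : Set (ℝ × ℝ) := {z : ℝ × ℝ | 0 < z.1 ∧ 0 < z.2 ∧ z.2 ≤ z.1 * Real.tan θ ∧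
    ENNReal.ofReal z.2 ≤ ypR p z.1} with hSdef
  set Rf : ℝ → ℝ := fun φ => lpnorm p (1 / Real.cos φ, 1 / Real.sin φ) with hRf
  set g : ℝ × ℝ → ℝ≥0∞ := fun q => ENNReal.ofReal (Real.cos q.2 * Real.sin q.2) with hg
  set W : Set (ℝ × ℝ) := {q : ℝ × ℝ | (0 < q.2 ∧ q.2 ≤ θ) ∧ 0 < q.1 ∧ q.1 ≤ Rf q.2} with hW
  have hRfmeas : Measurable Rf :=
    (lpnorm_continuous p).measurable.comp
      ((measurable_const.div Real.continuous_cos.measurable).prodMk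
        (measurable_const.div Real.continuous_sin.measurable))
  have hSmeas : MeasurableSet S := by
    have h1 : MeasurableSet {z : ℝ × ℝ | 0 < z.1} :=
      measurableSet_lt measurable_const measurable_fst
    have h2 : MeasurableSet {z : ℝ × ℝ | 0 < z.2} :=
      measurableSet_lt measurable_const measurable_snd
    have h3 : MeasurableSet {z : ℝ × ℝ | z.2 ≤ z.1 * Real.tan θ} :=
      measurableSet_le measurable_snd (measurable_fst.mul_const _)
    have h4 : MeasurableSet {z : ℝ × ℝ | ENNReal.ofReal z.2 ≤ ypR p z.1} :=
      measurableSet_le measurable_snd.ennreal_ofReal ((ypR_measurable p).comp measurable_fst)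
    exact h1.inter (h2.inter (h3.inter h4))
  have hWmeas : MeasurableSet W := by
    have h1 : MeasurableSet {q : ℝ × ℝ | 0 < q.2} :=
      measurableSet_lt measurable_const measurable_snd
    have h2 : MeasurableSet {q : ℝ × ℝ | q.2 ≤ θ} :=
      measurableSet_le measurable_snd measurable_const
    have h3 : MeasurableSet {q : ℝ × ℝ | 0 < q.1} :=
      measurableSet_lt measurable_const measurable_fst
    have h4 : MeasurableSet {q : ℝ × ℝ | q.1 ≤ Rf q.2} :=
      measurableSet_le measurable_fst (hRfmeas.comp measurable_snd)
    exact (h1.inter h2).inter (h3.inter h4)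
  have hWsub : W ⊆ polarCoord.target := by
    rintro ⟨r, φ⟩ ⟨⟨hφ0, hφθ⟩, hr0, hrR⟩
    rw [polarCoord_target]
    refine ⟨hr0, ?_, ?_⟩
    · have := pi_pos; simp only; linarith
    · have := pi_pos; simp only; linarith
  -- the null boundary set
  have hN : volume {q : ℝ × ℝ | q.1 * Real.cos q.2 = 1} = 0 := by
    have hNm : MeasurableSet {q : ℝ × ℝ | q.1 * Real.cos q.2 = 1} :=
      measurableSet_eq_fun (measurable_fst.mul (Real.continuous_cos.measurable.comp
        measurable_snd)) measurable_const
    rw [Measure.volume_eq_prod, Measure.prod_apply_symm hNm]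
    have : ∀ φ : ℝ, volume ((fun r => (r, φ)) ⁻¹' {q : ℝ × ℝ | q.1 * Real.cos q.2 = 1}) = 0 := by
      intro φ
      refine measure_mono_null ?_ (measure_singleton ((Real.cos φ)⁻¹))
      intro r hr
      simp only [mem_preimage, mem_setOf_eq] at hr
      have hcφ : Real.cos φ ≠ 0 := by
        intro h; rw [h, mul_zero] at hr; norm_num at hr
      simp only [mem_singleton_iff]
      field_simp
      linarith [hr]
    simp only [this, lintegral_zero]
  have hgmeas : Measurable g := by
    apply Measurable.ennreal_ofReal
    exact ((Real.continuous_cos.comp continuous_snd).mul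
      (Real.continuous_sin.comp continuous_snd)).measurable
  rw [← lintegral_indicator hSmeas F, ← lintegral_comp_polarCoord_symm' (S.indicator F)]
  have step : ∀ᵐ q ∂(volume.restrict polarCoord.target),
      ENNReal.ofReal q.1 * S.indicator F (polarCoord.symm q) = W.indicator g q := by
    filter_upwards [ae_restrict_mem polarCoord.open_target.measurableSet,
      (measure_eq_zero_iff_ae_notMem.1 hN).filter_mono (ae_mono Measure.restrict_le_self)]
      with q hq hqN
    rw [polarCoord_target] at hq
    obtain ⟨hr, hφm⟩ := hq
    simp only [mem_Ioi] at hr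
    simp only [mem_Ioo] at hφm
    have hsymm : polarCoord.symm q = (q.1 * Real.cos q.2, q.1 * Real.sin q.2) :=
      polarCoord_symm_apply q
    by_cases hWq : q ∈ W
    · obtain ⟨⟨hφ0, hφθ⟩, hr0, hrR⟩ := hWq
      have hφ2 : q.2 < π/2 := lt_of_le_of_lt hφθ hθ2
      have hcos : 0 < Real.cos q.2 :=
        Real.cos_pos_of_mem_Ioo ⟨by linarith [pi_pos], hφ2⟩
      have hsin : 0 < Real.sin q.2 := Real.sin_pos_of_pos_of_lt_pi hφ0 (by linarith [pi_pos])
      have hmem : polarCoord.symm q ∈ S := by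
        rw [hsymm]
        refine ⟨by positivity, by positivity, ?_, ?_⟩
        · exact (angle_iff ⟨hθ0, hθ2⟩ hr hφ0 hφ2).2 hφθ
        · exact (cond_iff_radius p hp hr hcos hsin hqN).2 hrR
      rw [Set.indicator_of_mem hmem, Set.indicator_of_mem
        (show q ∈ W from ⟨⟨hφ0, hφθ⟩, hr0, hrR⟩), hsymm]
      simp only [hF, hg]
      have hsq : (q.1 * Real.cos q.2) ^ 2 + (q.1 * Real.sin q.2) ^ 2 = q.1 ^ 2 := by
        rw [mul_pow, mul_pow, ← mul_add, cos_sq_add_sin_sq, mul_one]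
      rw [hsq, ← ENNReal.ofReal_mul hr.le]
      congr 1
      have h3 : ((q.1:ℝ) ^ 2) ^ (-(3:ℝ)/2) = (q.1 ^ 3)⁻¹ := by
        rw [← Real.rpow_natCast q.1 2, ← Real.rpow_mul hr.le,
          show ((2:ℕ):ℝ) * (-(3:ℝ)/2) = (-(3:ℝ)) by norm_num,
          Real.rpow_neg hr.le, show ((3:ℝ)) = ((3:ℕ):ℝ) by norm_num,
          Real.rpow_natCast]
      rw [h3]
      have h4 : q.1 ^ 3 ≠ 0 := by positivity
      field_simp
    · rw [Set.indicator_of_notMem hWq]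
      have hnmem : polarCoord.symm q ∉ S := by
        intro hmem
        apply hWq
        rw [hsymm] at hmem
        obtain ⟨hx, hy, hang, hcond⟩ := hmem
        have hcos : 0 < Real.cos q.2 := by
          rcases mul_pos_iff.1 hx with ⟨_, h⟩ | ⟨h, _⟩
          · exact h
          · linarith
        have hsin : 0 < Real.sin q.2 := by
          rcases mul_pos_iff.1 hy with ⟨_, h⟩ | ⟨h, _⟩
          · exact h
          · linarith
        have hφ0 : 0 < q.2 := by
          by_contra hc
          push_neg at hc
          have := Real.sin_nonpos_of_nonpos_of_neg_pi_le hc hφm.1.le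
          linarith
        have hφ2 : q.2 < π/2 := by
          by_contra hc
          push_neg at hc
          have := Real.cos_nonpos_of_pi_div_two_le_of_le hc (by linarith [pi_pos, hφm.2])
          linarith
        exact ⟨⟨hφ0, (angle_iff ⟨hθ0, hθ2⟩ hr hφ0 hφ2).1 hang⟩, hr,
          (cond_iff_radius p hp hr hcos hsin hqN).1 hcond⟩
      rw [Set.indicator_of_notMem hnmem, mul_zero]
  rw [lintegral_congr_ae step, lintegral_indicator hWmeas g,
    Measure.restrict_restrict hWmeas, inter_eq_self_of_subset_left hWsub,
    ← lintegral_indicator hWmeas g, Measure.volume_eq_prod,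
    lintegral_prod_symm' (W.indicator g) (hgmeas.indicator hWmeas)]
  have inner : ∀ φ : ℝ, (∫⁻ r : ℝ, W.indicator g (r, φ) ∂volume) =
      (Ioc (0:ℝ) θ).indicator (fun φ => ENNReal.ofReal (lpnorm p (Real.sin φ, Real.cos φ))) φ := by
    intro φ
    by_cases hφ : φ ∈ Ioc (0:ℝ) θ
    · rw [Set.indicator_of_mem hφ]
      have hφ2 : φ < π/2 := lt_of_le_of_lt hφ.2 hθ2
      have hcos : 0 < Real.cos φ :=
        Real.cos_pos_of_mem_Ioo ⟨by linarith [pi_pos, hφ.1], hφ2⟩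
      have hsin : 0 < Real.sin φ := Real.sin_pos_of_pos_of_lt_pi hφ.1 (by linarith [pi_pos])
      have heq : ∀ r : ℝ, W.indicator g (r, φ) =
          (Ioc (0:ℝ) (Rf φ)).indicator (fun _ => ENNReal.ofReal (Real.cos φ * Real.sin φ)) r := by
        intro r
        by_cases hrm : r ∈ Ioc (0:ℝ) (Rf φ)
        · rw [Set.indicator_of_mem hrm,
            Set.indicator_of_mem (show (r, φ) ∈ W from ⟨⟨hφ.1, hφ.2⟩, hrm.1, hrm.2⟩)]
        · rw [Set.indicator_of_notMem hrm, Set.indicator_of_notMem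
            (fun hq => hrm ⟨hq.2.1, hq.2.2⟩)]
      simp_rw [heq]
      rw [lintegral_indicator measurableSet_Ioc, setLIntegral_const, Real.volume_Ioc, sub_zero,
        ← ENNReal.ofReal_mul (by positivity), key_identity p hp hcos hsin]
    · rw [Set.indicator_of_notMem hφ]
      have heq : ∀ r : ℝ, W.indicator g (r, φ) = 0 := by
        intro r
        exact Set.indicator_of_notMem (fun hq => hφ ⟨hq.1.1, hq.1.2⟩) _
      simp_rw [heq]
      exact lintegral_zero
  simp_rw [inner]
  rw [lintegral_indicator measurableSet_Ioc, intervalIntegral.integral_of_le hθ0.le]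
  have hInt : IntegrableOn (fun φ : ℝ => lpnorm p (Real.sin φ, Real.cos φ))
      (Ioc (0:ℝ) θ) volume :=
    ((lpnorm_continuous p).comp
      (Real.continuous_sin.prodMk Real.continuous_cos)).integrableOn_Ioc
  rw [ofReal_integral_eq_lintegral_ofReal hInt
    (ae_of_all _ (fun φ => lpnorm_nonneg p _))]
end
end

section
/- Fix r ∈ [0,1] and let (X,Y) be a random vector on [1,∞)² with joint distribution function F(x,y) = (1 − 1/x)(1 − 1/y)(1 + r/(x+y)) for x,y ≥ 1. Then the marginal distribution functions are F₁(x) = 1 − 1/x and F₂(y) = 1 − 1/y; the joint survival function satisfies Pr[X ≥ 1/u, Y ≥ 1/v] = uv·(1 + r(1−u)(1−v)/(u+v)) for all u,v ∈ (0,1]; and consequently for all x,y ∈ (0,∞): lim_{t↓0} t^{−1}·Pr[X ≥ 1/(tx), Y ≥ 1/(ty)] = r·xy/(x+y). -/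
open MeasureTheory Set Real Filter Topology
open scoped ENNReal

noncomputable section

theorem stmt16 {Ω : Type*} [MeasurableSpace Ω] (P : Measure Ω) [IsProbabilityMeasure P]
    (r : ℝ) (hr : r ∈ Icc (0 : ℝ) 1)
    (X Y : Ω → ℝ) (hX : Measurable X) (hY : Measurable Y)
    (hsupp : ∀ ω, 1 ≤ X ω ∧ 1 ≤ Y ω)
    (hcdf : ∀ x y : ℝ, 1 ≤ x → 1 ≤ y →
      P {ω | X ω ≤ x ∧ Y ω ≤ y} =
        ENNReal.ofReal ((1 - 1 / x) * (1 - 1 / y) * (1 + r / (x + y)))) :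
    (∀ x ≥ (1 : ℝ), P {ω | X ω ≤ x} = ENNReal.ofReal (1 - 1 / x)) ∧
    (∀ y ≥ (1 : ℝ), P {ω | Y ω ≤ y} = ENNReal.ofReal (1 - 1 / y)) ∧
    (∀ u v : ℝ, u ∈ Ioc (0 : ℝ) 1 → v ∈ Ioc (0 : ℝ) 1 →
      P {ω | 1 / u ≤ X ω ∧ 1 / v ≤ Y ω} =
        ENNReal.ofReal (u * v * (1 + r * (1 - u) * (1 - v) / (u + v)))) ∧
    ∀ x > (0 : ℝ), ∀ y > (0 : ℝ),
      Tendsto (fun t : ℝ =>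
          t⁻¹ * (P {ω | 1 / (t * x) ≤ X ω ∧ 1 / (t * y) ≤ Y ω}).toReal)
        (𝓝[>] 0) (𝓝 (r * x * y / (x + y))) := by
  obtain ⟨hr0, hr1⟩ := hr
  have mA : ∀ s : ℝ, MeasurableSet {ω | X ω ≤ s} := fun s => hX measurableSet_Iic
  have mB : ∀ s : ℝ, MeasurableSet {ω | Y ω ≤ s} := fun s => hY measurableSet_Iic
  -- natural number sequence tendsto helpers
  have hnat : Tendsto (fun n : ℕ => (1:ℝ) + n) atTop atTop :=
    tendsto_atTop_add_const_left _ 1 tendsto_natCast_atTop_atTop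
  -- marginal of X
  have hFX : ∀ x : ℝ, 1 ≤ x → P {ω | X ω ≤ x} = ENNReal.ofReal (1 - 1 / x) := by
    intro x hx
    set s : ℕ → Set Ω := fun n => {ω | X ω ≤ x ∧ Y ω ≤ 1 + n} with hsdef
    have hmono : Monotone s := by
      intro m n hmn ω hω
      exact ⟨hω.1, hω.2.trans (by have : (m:ℝ) ≤ n := Nat.cast_le.2 hmn; linarith)⟩
    have hunion : (⋃ n, s n) = {ω | X ω ≤ x} := by
      ext ω
      simp only [hsdef, mem_iUnion, mem_setOf_eq]
      constructor
      · rintro ⟨n, h1, _⟩; exact h1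
      · intro h1
        obtain ⟨n, hn⟩ := exists_nat_ge (Y ω)
        exact ⟨n, h1, by linarith⟩
    have hlim := tendsto_measure_iUnion_atTop (μ := P) hmono
    rw [hunion] at hlim
    have hval : (P ∘ s) = fun n : ℕ =>
        ENNReal.ofReal ((1 - 1/x) * (1 - 1/(1 + (n:ℝ))) * (1 + r/(x + (1 + (n:ℝ))))) := by
      funext n
      exact hcdf x (1 + n) hx (by have := Nat.cast_nonneg (α := ℝ) n; linarith)
    rw [hval] at hlim
    have hlim2 : Tendsto (fun n : ℕ =>
        ENNReal.ofReal ((1 - 1/x) * (1 - 1/(1 + (n:ℝ))) * (1 + r/(x + (1 + (n:ℝ))))))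
        atTop (𝓝 (ENNReal.ofReal (1 - 1/x))) := by
      apply ENNReal.tendsto_ofReal
      have h2 : Tendsto (fun n : ℕ => 1/(1 + (n:ℝ))) atTop (𝓝 0) :=
        Tendsto.div_atTop tendsto_const_nhds hnat
      have h3 : Tendsto (fun n : ℕ => r/(x + (1 + (n:ℝ)))) atTop (𝓝 0) :=
        Tendsto.div_atTop tendsto_const_nhds (tendsto_atTop_add_const_left _ x hnat)
      have h4 : Tendsto (fun n : ℕ =>
          (1 - 1/x) * (1 - 1/(1 + (n:ℝ))) * (1 + r/(x + (1 + (n:ℝ)))))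
          atTop (𝓝 ((1 - 1/x) * (1 - 0) * (1 + 0))) :=
        (tendsto_const_nhds.mul (tendsto_const_nhds.sub h2)).mul (tendsto_const_nhds.add h3)
      simpa using h4
    exact tendsto_nhds_unique hlim hlim2
  -- marginal of Y
  have hFY : ∀ y : ℝ, 1 ≤ y → P {ω | Y ω ≤ y} = ENNReal.ofReal (1 - 1 / y) := by
    intro y hy
    set s : ℕ → Set Ω := fun n => {ω | X ω ≤ 1 + n ∧ Y ω ≤ y} with hsdef
    have hmono : Monotone s := by
      intro m n hmn ω hω
      exact ⟨hω.1.trans (by have : (m:ℝ) ≤ n := Nat.cast_le.2 hmn; linarith), hω.2⟩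
    have hunion : (⋃ n, s n) = {ω | Y ω ≤ y} := by
      ext ω
      simp only [hsdef, mem_iUnion, mem_setOf_eq]
      constructor
      · rintro ⟨n, _, h2⟩; exact h2
      · intro h2
        obtain ⟨n, hn⟩ := exists_nat_ge (X ω)
        exact ⟨n, by linarith, h2⟩
    have hlim := tendsto_measure_iUnion_atTop (μ := P) hmono
    rw [hunion] at hlim
    have hval : (P ∘ s) = fun n : ℕ =>
        ENNReal.ofReal ((1 - 1/(1 + (n:ℝ))) * (1 - 1/y) * (1 + r/((1 + (n:ℝ)) + y))) := by
      funext n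
      exact hcdf (1 + n) y (by have := Nat.cast_nonneg (α := ℝ) n; linarith) hy
    rw [hval] at hlim
    have hlim2 : Tendsto (fun n : ℕ =>
        ENNReal.ofReal ((1 - 1/(1 + (n:ℝ))) * (1 - 1/y) * (1 + r/((1 + (n:ℝ)) + y))))
        atTop (𝓝 (ENNReal.ofReal (1 - 1/y))) := by
      apply ENNReal.tendsto_ofReal
      have h2 : Tendsto (fun n : ℕ => 1/(1 + (n:ℝ))) atTop (𝓝 0) :=
        Tendsto.div_atTop tendsto_const_nhds hnat
      have h3 : Tendsto (fun n : ℕ => r/((1 + (n:ℝ)) + y)) atTop (𝓝 0) :=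
        Tendsto.div_atTop tendsto_const_nhds (tendsto_atTop_add_const_right _ y hnat)
      have h4 : Tendsto (fun n : ℕ =>
          (1 - 1/(1 + (n:ℝ))) * (1 - 1/y) * (1 + r/((1 + (n:ℝ)) + y)))
          atTop (𝓝 ((1 - 0) * (1 - 1/y) * (1 + 0))) :=
        ((tendsto_const_nhds.sub h2).mul tendsto_const_nhds).mul (tendsto_const_nhds.add h3)
      simpa using h4
    exact tendsto_nhds_unique hlim hlim2
  -- atoms are null
  have hatomX : ∀ a : ℝ, 1 ≤ a → P {ω | X ω = a} = 0 := by
    intro a ha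
    rcases eq_or_lt_of_le ha with h1 | h1
    · have hsub : {ω | X ω = a} ⊆ {ω | X ω ≤ 1} := by
        intro ω h
        have h : X ω = a := h
        show X ω ≤ 1
        rw [h, ← h1]
      refine measure_mono_null hsub ?_
      rw [hFX 1 le_rfl]; norm_num
    · have ha0 : (0:ℝ) < a := by linarith
      set a' : ℕ → ℝ := fun n => a - (a-1)/(n+1) with ha'
      have ha1 : ∀ n : ℕ, 1 ≤ a' n ∧ a' n < a := by
        intro n
        have hn1 : (1:ℝ) ≤ (n:ℝ) + 1 := by have := Nat.cast_nonneg (α := ℝ) n; linarith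
        constructor
        · have : (a-1)/((n:ℝ)+1) ≤ a - 1 := div_le_self (by linarith) hn1
          simp only [ha']; linarith
        · have : 0 < (a-1)/((n:ℝ)+1) := div_pos (by linarith) (by positivity)
          simp only [ha']; linarith
      have hle : ∀ n : ℕ, P {ω | X ω = a} ≤ ENNReal.ofReal ((1 - 1/a) - (1 - 1/(a' n))) := by
        intro n
        have hsub : {ω | X ω = a} ⊆ {ω | X ω ≤ a} \ {ω | X ω ≤ a' n} := by
          intro ω h
          have h : X ω = a := h
          refine ⟨h.le, fun hc => ?_⟩
          have hc : X ω ≤ a' n := hc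
          rw [h] at hc
          exact absurd hc (not_le.2 (ha1 n).2)
        calc P {ω | X ω = a} ≤ P ({ω | X ω ≤ a} \ {ω | X ω ≤ a' n}) := measure_mono hsub
          _ = P {ω | X ω ≤ a} - P {ω | X ω ≤ a' n} := by
              refine measure_diff (fun ω (h : X ω ≤ a' n) => h.trans (ha1 n).2.le)
                (mA _).nullMeasurableSet (measure_ne_top _ _)
          _ = ENNReal.ofReal (1 - 1/a) - ENNReal.ofReal (1 - 1/(a' n)) := by
              rw [hFX a ha, hFX (a' n) (ha1 n).1]
          _ = ENNReal.ofReal ((1 - 1/a) - (1 - 1/(a' n))) := by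
              refine (ENNReal.ofReal_sub (1 - 1/a) ?_).symm
              have h5 := (ha1 n).1
              have : 1/(a' n) ≤ 1 := by
                rw [div_le_one (by linarith)]; linarith
              linarith
      have htd : Tendsto (fun n : ℕ => ENNReal.ofReal ((1 - 1/a) - (1 - 1/(a' n)))) atTop (𝓝 0) := by
        rw [← ENNReal.ofReal_zero]
        apply ENNReal.tendsto_ofReal
        have h1' : Tendsto (fun n : ℕ => (a-1)/((n:ℝ)+1)) atTop (𝓝 0) :=
          Tendsto.div_atTop tendsto_const_nhds
            (tendsto_atTop_add_const_right _ 1 tendsto_natCast_atTop_atTop)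
        have ha'lim : Tendsto a' atTop (𝓝 a) := by
          have h5 : Tendsto (fun n : ℕ => a - (a-1)/((n:ℝ)+1)) atTop (𝓝 (a - 0)) :=
            tendsto_const_nhds.sub h1'
          simpa [ha'] using h5
        have h2 : Tendsto (fun n : ℕ => 1/(a' n)) atTop (𝓝 (1/a)) := by
          simp only [one_div]
          exact ha'lim.inv₀ (ne_of_gt ha0)
        have h3 : Tendsto (fun n : ℕ => (1 - 1/a) - (1 - 1/(a' n))) atTop
            (𝓝 ((1 - 1/a) - (1 - 1/a))) :=
          tendsto_const_nhds.sub (tendsto_const_nhds.sub h2)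
        simpa using h3
      have := ge_of_tendsto' htd hle
      exact le_antisymm this (zero_le)
  have hatomY : ∀ a : ℝ, 1 ≤ a → P {ω | Y ω = a} = 0 := by
    intro a ha
    rcases eq_or_lt_of_le ha with h1 | h1
    · have hsub : {ω | Y ω = a} ⊆ {ω | Y ω ≤ 1} := by
        intro ω h
        have h : Y ω = a := h
        show Y ω ≤ 1
        rw [h, ← h1]
      refine measure_mono_null hsub ?_
      rw [hFY 1 le_rfl]; norm_num
    · have ha0 : (0:ℝ) < a := by linarith
      set a' : ℕ → ℝ := fun n => a - (a-1)/(n+1) with ha'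
      have ha1 : ∀ n : ℕ, 1 ≤ a' n ∧ a' n < a := by
        intro n
        have hn1 : (1:ℝ) ≤ (n:ℝ) + 1 := by have := Nat.cast_nonneg (α := ℝ) n; linarith
        constructor
        · have : (a-1)/((n:ℝ)+1) ≤ a - 1 := div_le_self (by linarith) hn1
          simp only [ha']; linarith
        · have : 0 < (a-1)/((n:ℝ)+1) := div_pos (by linarith) (by positivity)
          simp only [ha']; linarith
      have hle : ∀ n : ℕ, P {ω | Y ω = a} ≤ ENNReal.ofReal ((1 - 1/a) - (1 - 1/(a' n))) := by
        intro n
        have hsub : {ω | Y ω = a} ⊆ {ω | Y ω ≤ a} \ {ω | Y ω ≤ a' n} := by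
          intro ω h
          have h : Y ω = a := h
          refine ⟨h.le, fun hc => ?_⟩
          have hc : Y ω ≤ a' n := hc
          rw [h] at hc
          exact absurd hc (not_le.2 (ha1 n).2)
        calc P {ω | Y ω = a} ≤ P ({ω | Y ω ≤ a} \ {ω | Y ω ≤ a' n}) := measure_mono hsub
          _ = P {ω | Y ω ≤ a} - P {ω | Y ω ≤ a' n} := by
              refine measure_diff (fun ω (h : Y ω ≤ a' n) => h.trans (ha1 n).2.le)
                (mB _).nullMeasurableSet (measure_ne_top _ _)
          _ = ENNReal.ofReal (1 - 1/a) - ENNReal.ofReal (1 - 1/(a' n)) := by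
              rw [hFY a ha, hFY (a' n) (ha1 n).1]
          _ = ENNReal.ofReal ((1 - 1/a) - (1 - 1/(a' n))) := by
              refine (ENNReal.ofReal_sub (1 - 1/a) ?_).symm
              have h5 := (ha1 n).1
              have : 1/(a' n) ≤ 1 := by
                rw [div_le_one (by linarith)]; linarith
              linarith
      have htd : Tendsto (fun n : ℕ => ENNReal.ofReal ((1 - 1/a) - (1 - 1/(a' n)))) atTop (𝓝 0) := by
        rw [← ENNReal.ofReal_zero]
        apply ENNReal.tendsto_ofReal
        have h1' : Tendsto (fun n : ℕ => (a-1)/((n:ℝ)+1)) atTop (𝓝 0) :=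
          Tendsto.div_atTop tendsto_const_nhds
            (tendsto_atTop_add_const_right _ 1 tendsto_natCast_atTop_atTop)
        have ha'lim : Tendsto a' atTop (𝓝 a) := by
          have h5 : Tendsto (fun n : ℕ => a - (a-1)/((n:ℝ)+1)) atTop (𝓝 (a - 0)) :=
            tendsto_const_nhds.sub h1'
          simpa [ha'] using h5
        have h2 : Tendsto (fun n : ℕ => 1/(a' n)) atTop (𝓝 (1/a)) := by
          simp only [one_div]
          exact ha'lim.inv₀ (ne_of_gt ha0)
        have h3 : Tendsto (fun n : ℕ => (1 - 1/a) - (1 - 1/(a' n))) atTop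
            (𝓝 ((1 - 1/a) - (1 - 1/a))) :=
          tendsto_const_nhds.sub (tendsto_const_nhds.sub h2)
        simpa using h3
      have := ge_of_tendsto' htd hle
      exact le_antisymm this (zero_le)
  -- strict survival function
  have hstrict : ∀ s t : ℝ, 1 ≤ s → 1 ≤ t →
      P {ω | s < X ω ∧ t < Y ω} =
        ENNReal.ofReal (1 - (1 - 1/s) - (1 - 1/t) + (1 - 1/s)*(1 - 1/t)*(1 + r/(s+t))) := by
    intro s t hs ht
    have hs0 : (0:ℝ) < s := by linarith
    have ht0 : (0:ℝ) < t := by linarith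
    have hst : (0:ℝ) < s + t := by linarith
    set F1 : ℝ := 1 - 1/s with hF1d
    set F2 : ℝ := 1 - 1/t with hF2d
    set F : ℝ := (1 - 1/s)*(1 - 1/t)*(1 + r/(s+t)) with hFd
    have hF1n : 0 ≤ F1 := by
      rw [hF1d, sub_nonneg, div_le_one hs0]; linarith
    have hF2n : 0 ≤ F2 := by
      rw [hF2d, sub_nonneg, div_le_one ht0]; linarith
    have hFn : 0 ≤ F := by
      rw [hFd]
      have : 0 ≤ r/(s+t) := by positivity
      apply mul_nonneg (mul_nonneg _ _) (by linarith)
      · rw [sub_nonneg, div_le_one hs0]; linarith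
      · rw [sub_nonneg, div_le_one ht0]; linarith
    have hVid : 1 - F1 - F2 + F = (s + t + r*(s-1)*(t-1))/(s*t*(s+t)) := by
      rw [hF1d, hF2d, hFd]
      field_simp
      ring
    have hVnn : 0 ≤ 1 - F1 - F2 + F := by
      rw [hVid]
      apply div_nonneg _ (by positivity)
      have : 0 ≤ r*(s-1)*(t-1) :=
        mul_nonneg (mul_nonneg hr0 (by linarith)) (by linarith)
      linarith
    have hVle : 1 - F1 - F2 + F ≤ 1 := by
      rw [hVid, div_le_one (by positivity)]
      nlinarith [mul_nonneg (sub_nonneg.2 hs) (sub_nonneg.2 ht), mul_pos hs0 ht0,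
        mul_nonneg (mul_nonneg hs0.le ht0.le) (show (0:ℝ) ≤ s + t - 2 by linarith)]
    have hWnn : 0 ≤ F1 + F2 - F := by linarith
    have hAB : P ({ω | X ω ≤ s} ∪ {ω | Y ω ≤ t}) = ENNReal.ofReal (F1 + F2 - F) := by
      have h1 := measure_union_add_inter (μ := P) {ω | X ω ≤ s} (mB t)
      have hint : {ω | X ω ≤ s} ∩ {ω | Y ω ≤ t} = {ω | X ω ≤ s ∧ Y ω ≤ t} := rfl
      rw [hint, hcdf s t hs ht, hFX s hs, hFY t ht] at h1
      have h2 : ENNReal.ofReal (F1 + F2 - F) + ENNReal.ofReal F =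
          ENNReal.ofReal F1 + ENNReal.ofReal F2 := by
        rw [← ENNReal.ofReal_add hWnn hFn, ← ENNReal.ofReal_add hF1n hF2n]
        congr 1; ring
      exact (ENNReal.add_left_inj ENNReal.ofReal_ne_top).mp (h1.trans h2.symm)
    have hcompl : {ω | s < X ω ∧ t < Y ω} = ({ω | X ω ≤ s} ∪ {ω | Y ω ≤ t})ᶜ := by
      ext ω
      simp [not_or, not_le, and_comm]
    rw [hcompl, prob_compl_eq_one_sub ((mA s).union (mB t)), hAB,
      ← ENNReal.ofReal_one, ← ENNReal.ofReal_sub _ hWnn]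
    congr 1; ring
  -- survival function with ≤
  have hsurv : ∀ u v : ℝ, u ∈ Ioc (0:ℝ) 1 → v ∈ Ioc (0:ℝ) 1 →
      P {ω | 1/u ≤ X ω ∧ 1/v ≤ Y ω} =
        ENNReal.ofReal (u * v * (1 + r * (1-u) * (1-v) / (u+v))) := by
    intro u v hu hv
    obtain ⟨hu0, hu1⟩ := hu
    obtain ⟨hv0, hv1⟩ := hv
    have hs : (1:ℝ) ≤ 1/u := by rw [le_div_iff₀ hu0]; linarith
    have ht : (1:ℝ) ≤ 1/v := by rw [le_div_iff₀ hv0]; linarith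
    have hEq : P {ω | 1/u ≤ X ω ∧ 1/v ≤ Y ω} = P {ω | 1/u < X ω ∧ 1/v < Y ω} := by
      apply le_antisymm
      · calc P {ω | 1/u ≤ X ω ∧ 1/v ≤ Y ω}
            ≤ P ({ω | 1/u < X ω ∧ 1/v < Y ω} ∪ ({ω | X ω = 1/u} ∪ {ω | Y ω = 1/v})) := by
              apply measure_mono
              rintro ω ⟨h1, h2⟩
              rcases eq_or_lt_of_le h1 with h1' | h1'
              · exact Or.inr (Or.inl h1'.symm)
              · rcases eq_or_lt_of_le h2 with h2' | h2'
                · exact Or.inr (Or.inr h2'.symm)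
                · exact Or.inl ⟨h1', h2'⟩
          _ ≤ P {ω | 1/u < X ω ∧ 1/v < Y ω} + P ({ω | X ω = 1/u} ∪ {ω | Y ω = 1/v}) :=
              measure_union_le _ _
          _ = P {ω | 1/u < X ω ∧ 1/v < Y ω} := by
              rw [measure_union_null (hatomX _ hs) (hatomY _ ht), add_zero]
      · exact measure_mono (fun ω h => ⟨h.1.le, h.2.le⟩)
    rw [hEq, hstrict _ _ hs ht]
    congr 1
    have huv : u + v ≠ 0 := by positivity
    have h1 : (1:ℝ)/(1/u) = u := one_div_one_div u
    have h2 : (1:ℝ)/(1/v) = v := one_div_one_div v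
    rw [h1, h2]
    rw [div_add_div _ _ (by positivity : u ≠ 0) (by positivity : v ≠ 0)]
    field_simp
    ring
  refine ⟨fun x hx => hFX x hx, fun y hy => hFY y hy, hsurv, ?_⟩
  -- the limit
  intro x hx y hy
  have hxy : (0:ℝ) < x + y := by linarith
  have hg : Tendsto (fun t : ℝ => t*x*y + r*x*y*((1 - t*x)*(1 - t*y))/(x+y))
      (𝓝[>] (0:ℝ)) (𝓝 (r * x * y / (x + y))) := by
    have hc : Continuous (fun t : ℝ => t*x*y + r*x*y*((1 - t*x)*(1 - t*y))/(x+y)) := by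
      fun_prop
    have h0 := (hc.tendsto 0).mono_left (nhdsWithin_le_nhds (s := Ioi (0:ℝ)))
    simpa using h0
  refine Tendsto.congr' ?_ hg
  have hmem : Ioc (0:ℝ) (min x⁻¹ y⁻¹) ∈ 𝓝[>] (0:ℝ) :=
    Ioc_mem_nhdsGT (lt_min (by positivity) (by positivity))
  filter_upwards [hmem] with t ht
  obtain ⟨ht0, ht1⟩ := ht
  have hux : t * x ∈ Ioc (0:ℝ) 1 := by
    refine ⟨by positivity, ?_⟩
    have : t ≤ x⁻¹ := ht1.trans (min_le_left _ _)
    calc t * x ≤ x⁻¹ * x := mul_le_mul_of_nonneg_right this (by linarith)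
      _ = 1 := inv_mul_cancel₀ (by positivity)
  have huy : t * y ∈ Ioc (0:ℝ) 1 := by
    refine ⟨by positivity, ?_⟩
    have : t ≤ y⁻¹ := ht1.trans (min_le_right _ _)
    calc t * y ≤ y⁻¹ * y := mul_le_mul_of_nonneg_right this (by linarith)
      _ = 1 := inv_mul_cancel₀ (by positivity)
  rw [hsurv _ _ hux huy, ENNReal.toReal_ofReal]
  · have htne : t ≠ 0 := ne_of_gt ht0
    field_simp
  · have h1 : 0 ≤ r * (1 - t*x) * (1 - t*y) / (t*x + t*y) := by
      apply div_nonneg _ (by positivity)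
      exact mul_nonneg (mul_nonneg hr0 (by linarith [hux.2])) (by linarith [huy.2])
    have h2 : (0:ℝ) ≤ t * x * (t * y) := by positivity
    nlinarith [h1, h2]
end
end

section
/- Let N ≥ 2 and let a₁,…,a_N ∈ [−1,1] satisfy min_i a_i < 0 < max_i a_i. On the open interval I = (−1/max_i a_i, −1/min_i a_i) (on which 1 + μa_i > 0 for all i), the function Ψ(μ) = Σ_{i=1}^N a_i/(1 + μa_i) is strictly decreasing, with Ψ(μ) → +∞ as μ decreases to the left endpoint of I and Ψ(μ) → −∞ as μ increases to the right endpoint of I; hence Ψ has a unique zero μ* ∈ I. Moreover, the weight vector p_i = 1/(N(1 + μ* a_i)), i = 1,…,N, is the unique maximizer of the empirical likelihood ∏_{i=1}^N p_i over the constraint set {p ∈ [0,∞)^N : Σ_i p_i = 1, Σ_i p_i a_i = 0}. -/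
open Set Filter Topology
open scoped BigOperators

noncomputable section

theorem stmt19 (N : ℕ) (hN : 2 ≤ N) (a : Fin N → ℝ)
    (hbd : ∀ i, |a i| ≤ 1)
    (A B : ℝ)
    (hAub : ∀ i, a i ≤ A) (hAmem : ∃ i, a i = A)
    (hBlb : ∀ i, B ≤ a i) (hBmem : ∃ i, a i = B)
    (hApos : 0 < A) (hBneg : B < 0)
    (Ψ : ℝ → ℝ) (hΨ : ∀ μ, Ψ μ = ∑ i, a i / (1 + μ * a i)) :
    (∀ μ ∈ Ioo (-1 / A) (-1 / B), ∀ i, 0 < 1 + μ * a i) ∧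
    StrictAntiOn Ψ (Ioo (-1 / A) (-1 / B)) ∧
    Tendsto Ψ (𝓝[>] (-1 / A)) atTop ∧
    Tendsto Ψ (𝓝[<] (-1 / B)) atBot ∧
    (∃! μs : ℝ, μs ∈ Ioo (-1 / A) (-1 / B) ∧ Ψ μs = 0) ∧
    ∀ μs ∈ Ioo (-1 / A) (-1 / B), Ψ μs = 0 →
      ((∀ i : Fin N, 0 ≤ 1 / (N * (1 + μs * a i))) ∧
        (∑ i, 1 / (N * (1 + μs * a i))) = 1 ∧
        (∑ i, 1 / (N * (1 + μs * a i)) * a i) = 0) ∧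
      ∀ q : Fin N → ℝ, (∀ i, 0 ≤ q i) → (∑ i, q i) = 1 → (∑ i, q i * a i) = 0 →
        q ≠ (fun i => 1 / (N * (1 + μs * a i))) →
        (∏ i, q i) < ∏ i : Fin N, 1 / (N * (1 + μs * a i)) := by
  have hΨ' : Ψ = fun μ => ∑ i, a i / (1 + μ * a i) := funext hΨ
  subst hΨ'
  have hNR : (0:ℝ) < N := by positivity
  have hA0 : -1 / A < 0 := by
    rw [neg_div, neg_lt_zero]; positivity
  have hB0 : (0:ℝ) < -1 / B := by
    rw [neg_div, neg_pos]
    exact div_neg_of_pos_of_neg one_pos hBneg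
  have hAB : -1 / A < -1 / B := hA0.trans hB0
  have hAinv : (-1 / A) * A = -1 := div_mul_cancel₀ (-1) hApos.ne'
  have hBinv : (-1 / B) * B = -1 := div_mul_cancel₀ (-1) hBneg.ne
  -- Part 1: positivity of denominators
  have hpos : ∀ μ ∈ Ioo (-1 / A) (-1 / B), ∀ i, 0 < 1 + μ * a i := by
    rintro μ ⟨hμ1, hμ2⟩ i
    rcases lt_trichotomy (a i) 0 with h | h | h
    · have h1 : μ * a i > (-1 / B) * a i := mul_lt_mul_of_neg_right hμ2 h
      have h3 : (-1/B) * (a i - B) ≥ 0 := mul_nonneg hB0.le (by linarith [hBlb i])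
      nlinarith
    · simp [h]
    · have h1 : μ * a i > (-1 / A) * a i := mul_lt_mul_of_pos_right hμ1 h
      have h3 : (-1/A) * (a i - A) ≥ 0 := by
        nlinarith [mul_nonneg (neg_nonneg.2 hA0.le) (sub_nonneg.2 (hAub i))]
      nlinarith
  -- Part 2: strict antitonicity
  have hanti : StrictAntiOn (fun μ => ∑ i, a i / (1 + μ * a i)) (Ioo (-1 / A) (-1 / B)) := by
    intro x hx y hy hxy
    obtain ⟨i₀, hi₀⟩ := hAmem
    apply Finset.sum_lt_sum
    · intro i _
      have hdx := hpos x hx i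
      have hdy := hpos y hy i
      rw [div_le_div_iff₀ hdy hdx]
      nlinarith [sq_nonneg (a i)]
    · refine ⟨i₀, Finset.mem_univ _, ?_⟩
      have hdx := hpos x hx i₀
      have hdy := hpos y hy i₀
      rw [hi₀] at hdx hdy ⊢
      rw [div_lt_div_iff₀ hdy hdx]
      nlinarith [mul_pos (mul_pos hApos hApos) (sub_pos.2 hxy)]
  -- pointwise bounds on terms
  have term_ge : ∀ μ ∈ Ioo (-1/A) (0:ℝ), ∀ i, -1 ≤ a i / (1 + μ * a i) := by
    rintro μ ⟨hμ1, hμ2⟩ i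
    have hd := hpos μ ⟨hμ1, hμ2.trans hB0⟩ i
    rw [le_div_iff₀ hd]
    rcases le_or_gt 0 (a i) with h | h
    · nlinarith [abs_le.1 (hbd i)]
    · nlinarith [abs_le.1 (hbd i), mul_pos_of_neg_of_neg hμ2 h]
  have term_le : ∀ μ ∈ Ioo (0:ℝ) (-1/B), ∀ i, a i / (1 + μ * a i) ≤ 1 := by
    rintro μ ⟨hμ1, hμ2⟩ i
    have hd := hpos μ ⟨hA0.trans hμ1, hμ2⟩ i
    rw [div_le_iff₀ hd]
    rcases le_or_gt 0 (a i) with h | h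
    · nlinarith [abs_le.1 (hbd i), mul_nonneg hμ1.le h]
    · nlinarith [abs_le.1 (hbd i)]
  have hcastN : ((N - 1 : ℕ) : ℝ) ≤ (N : ℝ) := by
    exact_mod_cast Nat.cast_le.2 (Nat.sub_le N 1)
  -- Part 3: tendsto atTop
  have htop : Tendsto (fun μ => ∑ i, a i / (1 + μ * a i)) (𝓝[>] (-1 / A)) atTop := by
    obtain ⟨i₀, hi₀⟩ := hAmem
    have h1 : Tendsto (fun μ : ℝ => 1 + μ * A) (𝓝[>] (-1/A)) (𝓝[>] 0) := by
      rw [tendsto_nhdsWithin_iff]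
      constructor
      · have hc : Tendsto (fun μ : ℝ => 1 + μ * A) (𝓝 (-1/A)) (𝓝 (1 + (-1/A) * A)) :=
          (continuous_const.add (continuous_id.mul continuous_const)).tendsto _
        rw [hAinv] at hc
        norm_num at hc
        exact hc.mono_left nhdsWithin_le_nhds
      · filter_upwards [self_mem_nhdsWithin] with μ hμ
        have h2 := mul_lt_mul_of_pos_right (mem_Ioi.1 hμ) hApos
        simp only [mem_Ioi]
        linarith [hAinv]
    have h2 : Tendsto (fun μ : ℝ => A * (1 + μ * A)⁻¹ + -(N:ℝ)) (𝓝[>] (-1/A)) atTop :=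
      tendsto_atTop_add_const_right _ _
        ((tendsto_inv_nhdsGT_zero.comp h1).const_mul_atTop hApos)
    apply tendsto_atTop_mono' _ _ h2
    filter_upwards [Ioo_mem_nhdsGT hA0] with μ hμ
    have hkey : ∑ i, a i / (1 + μ * a i)
        = a i₀ / (1 + μ * a i₀) + ∑ i ∈ Finset.univ.erase i₀, a i / (1 + μ * a i) :=
      (Finset.add_sum_erase _ _ (Finset.mem_univ i₀)).symm
    have hbound : -((N:ℝ)) ≤ ∑ i ∈ Finset.univ.erase i₀, a i / (1 + μ * a i) := by
      have h3 : ∑ i ∈ Finset.univ.erase i₀, (-1 : ℝ) ≤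
          ∑ i ∈ Finset.univ.erase i₀, a i / (1 + μ * a i) :=
        Finset.sum_le_sum fun i _ => term_ge μ hμ i
      have h4 : (Finset.univ.erase i₀).card = N - 1 := by
        simp [Finset.card_erase_of_mem]
      rw [Finset.sum_const, h4] at h3
      simp only [nsmul_eq_mul, mul_neg_one] at h3
      linarith
    have hterm : a i₀ / (1 + μ * a i₀) = A * (1 + μ * A)⁻¹ := by
      rw [hi₀, div_eq_mul_inv]
    rw [hkey, hterm]
    linarith
  -- Part 4: tendsto atBot
  have hbot : Tendsto (fun μ => ∑ i, a i / (1 + μ * a i)) (𝓝[<] (-1 / B)) atBot := by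
    obtain ⟨i₁, hi₁⟩ := hBmem
    have h1 : Tendsto (fun μ : ℝ => 1 + μ * B) (𝓝[<] (-1/B)) (𝓝[>] 0) := by
      rw [tendsto_nhdsWithin_iff]
      constructor
      · have hc : Tendsto (fun μ : ℝ => 1 + μ * B) (𝓝 (-1/B)) (𝓝 (1 + (-1/B) * B)) :=
          (continuous_const.add (continuous_id.mul continuous_const)).tendsto _
        rw [hBinv] at hc
        norm_num at hc
        exact hc.mono_left nhdsWithin_le_nhds
      · filter_upwards [self_mem_nhdsWithin] with μ hμ
        have h2 := mul_lt_mul_of_neg_right (mem_Iio.1 hμ) hBneg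
        simp only [mem_Ioi]
        linarith [hBinv]
    have h2 : Tendsto (fun μ : ℝ => B * (1 + μ * B)⁻¹ + (N:ℝ)) (𝓝[<] (-1/B)) atBot :=
      tendsto_atBot_add_const_right _ _
        ((tendsto_const_mul_atBot_of_neg hBneg).2 (tendsto_inv_nhdsGT_zero.comp h1))
    apply tendsto_atBot_mono' _ _ h2
    filter_upwards [Ioo_mem_nhdsLT hB0] with μ hμ
    have hkey : ∑ i, a i / (1 + μ * a i)
        = a i₁ / (1 + μ * a i₁) + ∑ i ∈ Finset.univ.erase i₁, a i / (1 + μ * a i) :=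
      (Finset.add_sum_erase _ _ (Finset.mem_univ i₁)).symm
    have hbound : ∑ i ∈ Finset.univ.erase i₁, a i / (1 + μ * a i) ≤ (N:ℝ) := by
      have h3 : ∑ i ∈ Finset.univ.erase i₁, a i / (1 + μ * a i) ≤
          ∑ i ∈ Finset.univ.erase i₁, (1 : ℝ) :=
        Finset.sum_le_sum fun i _ => term_le μ hμ i
      have h4 : (Finset.univ.erase i₁).card = N - 1 := by
        simp [Finset.card_erase_of_mem]
      rw [Finset.sum_const, h4] at h3
      simp only [nsmul_eq_mul, mul_one] at h3
      linarith
    have hterm : a i₁ / (1 + μ * a i₁) = B * (1 + μ * B)⁻¹ := by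
      rw [hi₁, div_eq_mul_inv]
    rw [hkey, hterm]
    linarith
  -- continuity on I
  have hcont : ContinuousOn (fun μ => ∑ i, a i / (1 + μ * a i)) (Ioo (-1/A) (-1/B)) := by
    apply continuousOn_finset_sum
    intro i _
    exact continuousOn_const.div
      ((continuous_const.add (continuous_id.mul continuous_const)).continuousOn)
      (fun μ hμ => (hpos μ hμ i).ne')
  -- Part 5: unique zero
  have hzero : ∃! μs : ℝ, μs ∈ Ioo (-1 / A) (-1 / B) ∧
      (fun μ => ∑ i, a i / (1 + μ * a i)) μs = 0 := by
    have hm2 : ∀ᶠ μ in 𝓝[<] (-1/B), μ ∈ Ioo (0:ℝ) (-1/B) :=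
      Ioo_mem_nhdsLT hB0
    have hm1 : ∀ᶠ μ in 𝓝[>] (-1/A), μ ∈ Ioo (-1/A) (0:ℝ) :=
      Ioo_mem_nhdsGT hA0
    obtain ⟨μ₂, hμ₂neg, hμ₂I⟩ := ((hbot.eventually_lt_atBot 0).and hm2).exists
    obtain ⟨μ₁, hμ₁pos, hμ₁I⟩ := ((htop.eventually_gt_atTop 0).and hm1).exists
    have hμ₁₂ : μ₁ < μ₂ := hμ₁I.2.trans hμ₂I.1
    have hsub : Icc μ₁ μ₂ ⊆ Ioo (-1/A) (-1/B) := fun x hx =>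
      ⟨hμ₁I.1.trans_le hx.1, hx.2.trans_lt hμ₂I.2⟩
    have hivt := intermediate_value_Ioo' hμ₁₂.le (hcont.mono hsub)
    obtain ⟨μs, hμsmem, hμs0⟩ := hivt (⟨hμ₂neg, hμ₁pos⟩ :
      (0:ℝ) ∈ Ioo ((fun μ => ∑ i, a i / (1 + μ * a i)) μ₂)
        ((fun μ => ∑ i, a i / (1 + μ * a i)) μ₁))
    have hμsI : μs ∈ Ioo (-1/A) (-1/B) := hsub ⟨hμsmem.1.le, hμsmem.2.le⟩
    refine ⟨μs, ⟨hμsI, hμs0⟩, ?_⟩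
    rintro y ⟨hyI, hy0⟩
    rcases lt_trichotomy y μs with h | h | h
    · have := hanti hyI hμsI h
      rw [hy0, hμs0] at this
      exact absurd this (lt_irrefl 0)
    · exact h
    · have := hanti hμsI hyI h
      rw [hy0, hμs0] at this
      exact absurd this (lt_irrefl 0)
  refine ⟨hpos, hanti, htop, hbot, hzero, ?_⟩
  -- Part 6
  intro μs hμsI hΨ0
  have hS : ∑ i, a i / (1 + μs * a i) = 0 := hΨ0
  have hd : ∀ i, 0 < 1 + μs * a i := hpos μs hμsI
  have hNd : ∀ i, 0 < (N:ℝ) * (1 + μs * a i) := fun i => mul_pos hNR (hd i)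
  have hsum1 : (∑ i, 1 / ((N:ℝ) * (1 + μs * a i))) = 1 := by
    have hpt : ∀ i : Fin N, 1 / ((N:ℝ) * (1 + μs * a i))
        = (1:ℝ)/N - 1/N * μs * (a i / (1 + μs * a i)) := by
      intro i
      field_simp [hNR.ne', (hd i).ne']
      ring
    calc ∑ i, 1 / ((N:ℝ) * (1 + μs * a i))
        = ∑ i, ((1:ℝ)/N - 1/N * μs * (a i / (1 + μs * a i))) :=
          Finset.sum_congr rfl fun i _ => hpt i
      _ = (∑ _i : Fin N, (1:ℝ)/N) - 1/N * μs * ∑ i, a i / (1 + μs * a i) := by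
          rw [Finset.sum_sub_distrib, ← Finset.mul_sum]
      _ = 1 := by
          rw [hS, mul_zero, sub_zero, Finset.sum_const, Finset.card_univ,
            Fintype.card_fin, nsmul_eq_mul]
          field_simp
  have hsum2 : (∑ i, 1 / ((N:ℝ) * (1 + μs * a i)) * a i) = 0 := by
    have hpt : ∀ i : Fin N, 1 / ((N:ℝ) * (1 + μs * a i)) * a i
        = (1/N) * (a i / (1 + μs * a i)) := by
      intro i
      rw [div_mul_eq_mul_div, div_mul_div_comm, one_mul]
    rw [Finset.sum_congr rfl fun i _ => hpt i, ← Finset.mul_sum, hS, mul_zero]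
  refine ⟨⟨fun i => (div_pos one_pos (hNd i)).le, hsum1, hsum2⟩, ?_⟩
  intro q hq0 hq1 hqa hqne
  have hPpos : 0 < ∏ i : Fin N, 1 / ((N:ℝ) * (1 + μs * a i)) :=
    Finset.prod_pos fun i _ => div_pos one_pos (hNd i)
  by_cases hq : ∀ i, 0 < q i
  · set r : Fin N → ℝ := fun i => (N:ℝ) * (1 + μs * a i) * q i with hr
    have hrpos : ∀ i, 0 < r i := fun i => mul_pos (hNd i) (hq i)
    have hrsum : ∑ i, r i = N := by
      calc ∑ i, r i = ∑ i, ((N:ℝ) * q i + (N:ℝ) * μs * (q i * a i)) :=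
            Finset.sum_congr rfl fun i _ => by rw [hr]; ring
        _ = (N:ℝ) * ∑ i, q i + (N:ℝ) * μs * ∑ i, q i * a i := by
            rw [Finset.sum_add_distrib, ← Finset.mul_sum, ← Finset.mul_sum]
        _ = N := by rw [hq1, hqa, mul_zero, add_zero, mul_one]
    obtain ⟨j, hj⟩ : ∃ j, q j ≠ 1 / ((N:ℝ) * (1 + μs * a j)) := by
      by_contra hcon
      push_neg at hcon
      exact hqne (funext hcon)
    have hrj : r j ≠ 1 := by
      intro hcon
      apply hj
      rw [eq_div_iff (hNd j).ne', mul_comm]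
      exact hcon
    have hlog : ∑ i, Real.log (r i) < 0 := by
      have hle : ∀ i ∈ Finset.univ, Real.log (r i) ≤ r i - 1 :=
        fun i _ => Real.log_le_sub_one_of_pos (hrpos i)
      have hlt : ∃ i ∈ Finset.univ, Real.log (r i) < r i - 1 :=
        ⟨j, Finset.mem_univ j, Real.log_lt_sub_one_of_pos (hrpos j) hrj⟩
      calc ∑ i, Real.log (r i) < ∑ i, (r i - 1) := Finset.sum_lt_sum hle hlt
        _ = 0 := by rw [Finset.sum_sub_distrib, hrsum]; simp
    have hprodr : ∏ i, r i < 1 := by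
      have hlogprod : Real.log (∏ i, r i) = ∑ i, Real.log (r i) :=
        Real.log_prod fun i _ => (hrpos i).ne'
      have hPr : 0 < ∏ i, r i := Finset.prod_pos fun i _ => hrpos i
      rw [← hlogprod] at hlog
      exact (Real.log_neg_iff hPr).1 hlog
    have hfact : ∏ i, r i = (∏ i : Fin N, ((N:ℝ) * (1 + μs * a i))) * ∏ i, q i :=
      Finset.prod_mul_distrib
    have hDpos : 0 < ∏ i : Fin N, ((N:ℝ) * (1 + μs * a i)) :=
      Finset.prod_pos fun i _ => hNd i
    have hPform : ∏ i : Fin N, 1 / ((N:ℝ) * (1 + μs * a i))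
        = 1 / (∏ i : Fin N, ((N:ℝ) * (1 + μs * a i))) := by
      rw [Finset.prod_div_distrib, Finset.prod_const_one]
    rw [hfact] at hprodr
    rw [hPform, lt_div_iff₀ hDpos, mul_comm]
    exact hprodr
  · push_neg at hq
    obtain ⟨j, hj⟩ := hq
    have hqj : q j = 0 := le_antisymm hj (hq0 j)
    rw [Finset.prod_eq_zero (Finset.mem_univ j) hqj]
    exact hPpos
end
end
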